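/- arXiv:0910.4800 — 7 statements merged into one kernel-verified Lean document; each statement's English description precedes it below -/
import Mathlib

section
/- Let 𝒜 be a nonempty finite alphabet and let ω be a Toeplitz sequence over 𝒜. Then the set of Toeplitz sequences contained in Z(ω,σ) is a residual subset of Z(ω,σ): it is a countable intersection of open subsets of Z(ω,σ) and it is dense in Z(ω,σ). -/
/-- The one-sided shift on sequences.  Sequences are 0-indexed here: index `n`
stands for position `n+1` of the paper's sequences `{1,2,3,…} → 𝒜`. -/
def shift {𝒜 : Type*} (x : ℕ → 𝒜) : ℕ → 𝒜 := fun n => x (n + 1)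

/-- `Z(ω,σ)`: the closure of the forward shift-orbit of `ω`. -/
def orbitClosure {𝒜 : Type*} [TopologicalSpace 𝒜] (ω : ℕ → 𝒜) : Set (ℕ → 𝒜) :=
  closure {y | ∃ n : ℕ, shift^[n] ω = y}

/-- A sequence is Toeplitz if every position is periodically repeated. -/
def IsToeplitz {𝒜 : Type*} (x : ℕ → 𝒜) : Prop :=
  ∀ n : ℕ, ∃ p : ℕ, 0 < p ∧ ∀ k : ℕ, 0 < k → x (n + k * p) = x n

set_option linter.unusedSectionVars false

namespace ToepAux

section Basic

variable {𝒜 : Type*}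

lemma shift_iterate : ∀ (m : ℕ) (x : ℕ → 𝒜) (n : ℕ), shift^[m] x n = x (n + m)
  | 0, x, n => by simp
  | (m+1), x, n => by
    rw [Function.iterate_succ_apply, shift_iterate m (shift x) n]
    show x (n + m + 1) = x (n + (m + 1))
    ring_nf

lemma isToeplitz_shift_iterate {x : ℕ → 𝒜} (hx : IsToeplitz x) (m : ℕ) :
    IsToeplitz (shift^[m] x) := by
  intro n
  obtain ⟨p, hp, hper⟩ := hx (n + m)
  refine ⟨p, hp, fun k hk => ?_⟩
  rw [shift_iterate, shift_iterate]
  rw [show n + k * p + m = (n + m) + k * p from by ring]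
  exact hper k hk

/-- full-period predicate -/
def AllPer (x : ℕ → 𝒜) (i P : ℕ) : Prop := ∀ k : ℕ, x (i + k * P) = x i

lemma allPer_mul {x : ℕ → 𝒜} {i P : ℕ} (h : AllPer x i P) (Q : ℕ) :
    AllPer x i (P * Q) := fun k => by
  rw [show i + k * (P * Q) = i + (k * Q) * P from by ring]; exact h (k * Q)

lemma exists_common_period {x : ℕ → 𝒜} (hx : IsToeplitz x) (t : ℕ) :
    ∃ P : ℕ, 0 < P ∧ ∀ i ≤ t, AllPer x i P := by
  induction t with
  | zero =>
    obtain ⟨p, hp, hper⟩ := hx 0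
    refine ⟨p, hp, fun i hi k => ?_⟩
    interval_cases i
    rcases Nat.eq_zero_or_pos k with rfl | hk
    · simp
    · exact hper k hk
  | succ t ih =>
    obtain ⟨P, hP, hall⟩ := ih
    obtain ⟨q, hq, hper⟩ := hx (t + 1)
    refine ⟨P * q, Nat.mul_pos hP hq, fun i hi => ?_⟩
    by_cases h : i ≤ t
    · exact allPer_mul (hall i h) q
    · have hi2 : i = t + 1 := by omega
      subst hi2
      intro k
      rw [show t + 1 + k * (P * q) = t + 1 + (k * P) * q from by ring]
      rcases Nat.eq_zero_or_pos k with rfl | hk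
      · simp
      · exact hper (k * P) (Nat.mul_pos hk hP)


variable [TopologicalSpace 𝒜] [DiscreteTopology 𝒜]

/-- cylinder set -/
def cyl (x : ℕ → 𝒜) (N : ℕ) : Set (ℕ → 𝒜) := {y | ∀ i ≤ N, y i = x i}

lemma isOpen_cyl (x : ℕ → 𝒜) (N : ℕ) : IsOpen (cyl x N) := by
  have h : cyl x N = ⋂ i ∈ Finset.range (N + 1), (fun y : ℕ → 𝒜 => y i) ⁻¹' {x i} := by
    ext y
    simp [cyl, Nat.lt_succ_iff]
  rw [h]
  exact isOpen_biInter_finset fun i _ =>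
    (isOpen_discrete _).preimage (continuous_apply i)

lemma mem_closure_iff_cyl {S : Set (ℕ → 𝒜)} {z : ℕ → 𝒜} :
    z ∈ closure S ↔ ∀ N : ℕ, ∃ s ∈ S, ∀ i ≤ N, s i = z i := by
  constructor
  · intro h N
    obtain ⟨s, hs1, hs2⟩ := _root_.mem_closure_iff.mp h (cyl z N) (isOpen_cyl z N)
      (fun i _ => rfl)
    exact ⟨s, hs2, hs1⟩
  · intro h
    rw [_root_.mem_closure_iff]
    intro U hU hzU
    obtain ⟨I, u, hu, hsub⟩ := isOpen_pi_iff.mp hU z hzU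
    obtain ⟨s, hsS, hagree⟩ := h (I.sup id)
    refine ⟨s, hsub fun i hi => ?_, hsS⟩
    rw [hagree i (Finset.le_sup (f := id) hi)]
    exact (hu i hi).2

lemma continuous_shift : Continuous (shift : (ℕ → 𝒜) → (ℕ → 𝒜)) :=
  continuous_pi fun n => continuous_apply (n + 1)

/-- minimality, step 1 : `ω ∈ Z(z)` for every `z ∈ Z(ω)` -/
lemma min1 {ω : ℕ → 𝒜} (hω : IsToeplitz ω) {z : ℕ → 𝒜} (hz : z ∈ orbitClosure ω) :
    ω ∈ closure {y | ∃ m : ℕ, shift^[m] z = y} := by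
  rw [mem_closure_iff_cyl]
  intro N
  obtain ⟨P, hP, hper⟩ := exists_common_period hω N
  obtain ⟨s, hsOrb, hagree⟩ := mem_closure_iff_cyl.mp hz (P + N)
  obtain ⟨m, rfl⟩ := hsOrb
  -- choose j ≤ P with m + j a multiple of P
  have hmod : m % P < P := Nat.mod_lt _ hP
  have hdm : P * (m / P) + m % P = m := Nat.div_add_mod m P
  refine ⟨shift^[P * (m / P) + P - m] z, ⟨_, rfl⟩, fun i hi => ?_⟩
  have hjP : P * (m / P) + P - m ≤ P := by omega
  rw [shift_iterate]
  have h1 : i + (P * (m / P) + P - m) ≤ P + N := by omega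
  rw [← hagree _ h1, shift_iterate]
  have h2 : i + (P * (m / P) + P - m) + m = i + (m / P + 1) * P := by
    have he : (m / P + 1) * P = P * (m / P) + P := by ring
    omega
  rw [h2]
  exact hper i hi _

/-- minimality, step 2 : if `y ∈ Z(ω)` is Toeplitz then `Z(ω) ⊆ Z(y)`. -/
lemma min2 {ω y : ℕ → 𝒜} (hω : IsToeplitz ω) (hy : y ∈ orbitClosure ω) :
    orbitClosure ω ⊆ closure {w | ∃ m : ℕ, shift^[m] y = w} := by
  have hωy : ω ∈ closure {w | ∃ m : ℕ, shift^[m] y = w} := min1 hω hy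
  have horb : {w | ∃ m : ℕ, shift^[m] ω = w} ⊆ closure {w | ∃ m : ℕ, shift^[m] y = w} := by
    rintro w ⟨m, rfl⟩
    have hc : Continuous (shift^[m] : (ℕ → 𝒜) → (ℕ → 𝒜)) := continuous_shift.iterate m
    have h1 : shift^[m] ω ∈ shift^[m] '' closure {w | ∃ m : ℕ, shift^[m] y = w} :=
      ⟨ω, hωy, rfl⟩
    have h2 := image_closure_subset_closure_image (s := {w | ∃ m : ℕ, shift^[m] y = w}) hc h1
    refine closure_mono ?_ h2
    rintro w ⟨v, ⟨k, rfl⟩, rfl⟩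
    exact ⟨m + k, (Function.iterate_add_apply _ m k y)⟩
  exact closure_minimal horb isClosed_closure

end Basic

section Skeleton

variable {𝒜 : Type*} (y : ℕ → 𝒜) (P : ℕ)

/-- `c` is a fully `P`-periodic position of `y`. -/
def Dp (c : ℕ) : Prop := ∀ k : ℕ, y (c + k * P) = y c

/-- `ρ` is a skeleton of `z` (relative to `y, P`). -/
def Sk (z : ℕ → 𝒜) (ρ : ℕ) : Prop :=
  ∀ j : ℕ, Dp y P ((j + ρ) % P) → z j = y ((j + ρ) % P)

variable {y P}

lemma sk_orbit (m : ℕ) : Sk y P (shift^[m] y) (m % P) := by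
  intro j h
  rw [shift_iterate]
  have hc : (j + m % P) % P = (j + m) % P := by simp [Nat.add_mod]
  have hd := Nat.mod_add_div' (j + m) P
  rw [← hd, ← hc]
  exact h ((j + m) / P)

variable [TopologicalSpace 𝒜] [DiscreteTopology 𝒜]

lemma sk_closed (ρ : ℕ) : IsClosed {z : ℕ → 𝒜 | Sk y P z ρ} := by
  have h : {z : ℕ → 𝒜 | Sk y P z ρ} =
      ⋂ j : ℕ, {z : ℕ → 𝒜 | Dp y P ((j + ρ) % P) → z j = y ((j + ρ) % P)} := by
    ext z; simp [Sk, Set.mem_iInter]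
  rw [h]
  refine isClosed_iInter fun j => ?_
  by_cases hD : Dp y P ((j + ρ) % P)
  · have h2 : {z : ℕ → 𝒜 | Dp y P ((j + ρ) % P) → z j = y ((j + ρ) % P)} =
        (fun z : ℕ → 𝒜 => z j) ⁻¹' {y ((j + ρ) % P)} := by
      ext z; simp [hD]
    rw [h2]
    exact (isClosed_discrete _).preimage (continuous_apply j)
  · have h2 : {z : ℕ → 𝒜 | Dp y P ((j + ρ) % P) → z j = y ((j + ρ) % P)} = Set.univ := by
      ext z; simp [hD]
    rw [h2]; exact isClosed_univ

lemma sk_exists (hP : 0 < P) {z : ℕ → 𝒜}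
    (hz : z ∈ closure {w | ∃ m : ℕ, shift^[m] y = w}) : ∃ ρ < P, Sk y P z ρ := by
  have hsub : {w : ℕ → 𝒜 | ∃ m : ℕ, shift^[m] y = w} ⊆
      ⋃ ρ ∈ Finset.range P, {z : ℕ → 𝒜 | Sk y P z ρ} := by
    rintro w ⟨m, rfl⟩
    exact Set.mem_biUnion (Finset.mem_range.mpr (Nat.mod_lt _ hP)) (sk_orbit m)
  have hcl : IsClosed (⋃ ρ ∈ Finset.range P, {z : ℕ → 𝒜 | Sk y P z ρ}) :=
    Set.Finite.isClosed_biUnion (Finset.range P).finite_toSet fun ρ _ => sk_closed ρ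
  have hm := closure_minimal hsub hcl hz
  obtain ⟨ρ, hρ, hsk⟩ := Set.mem_iUnion₂.mp hm
  exact ⟨ρ, Finset.mem_range.mp hρ, hsk⟩

end Skeleton

/-- The key openness lemma. -/
lemma main_open {𝒜 : Type*} [TopologicalSpace 𝒜] [DiscreteTopology 𝒜] {ω : ℕ → 𝒜}
    (hω : IsToeplitz ω) {y : ℕ → 𝒜} (hy : y ∈ orbitClosure ω) (hyT : IsToeplitz y)
    (n : ℕ) :
    ∃ L : ℕ, ∀ z ∈ orbitClosure ω, (∀ i ≤ L, z i = y i) →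
      ∃ p : ℕ, 0 < p ∧ ∀ k : ℕ, 0 < k → z (n + k * p) = z n := by
  classical
  obtain ⟨P, hP, hper⟩ := exists_common_period hyT n
  have hZ : orbitClosure ω ⊆ closure {w | ∃ m : ℕ, shift^[m] y = w} := min2 hω hy
  by_contra hcon
  push_neg at hcon
  have h1 : ∀ L : ℕ, ∃ ρ < P, ¬ Dp y P ((n + ρ) % P) ∧
      ∃ z, (∀ i ≤ L, z i = y i) ∧ Sk y P z ρ := by
    intro L
    obtain ⟨z, hzZ, hzy, hznp⟩ := hcon L
    obtain ⟨ρ, hρP, hsk⟩ := sk_exists hP (hZ hzZ)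
    refine ⟨ρ, hρP, ?_, z, hzy, hsk⟩
    intro hD
    have hzn : z n = y ((n + ρ) % P) := hsk n hD
    have hper' : ∀ k : ℕ, 0 < k → z (n + k * P) = z n := by
      intro k hk
      have e : (n + k * P + ρ) % P = (n + ρ) % P := by
        rw [show n + k * P + ρ = (n + ρ) + k * P from by ring, Nat.add_mul_mod_self_right]
      have hz2 := hsk (n + k * P) (by rw [e]; exact hD)
      rw [hz2, e, hzn]
    obtain ⟨k, hk, hne⟩ := hznp P hP
    exact hne (hper' k hk)
  have h2 : ∃ ρ < P, ¬ Dp y P ((n + ρ) % P) ∧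
      ∀ L : ℕ, ∃ z, (∀ i ≤ L, z i = y i) ∧ Sk y P z ρ := by
    by_contra h
    push_neg at h
    choose! B hB using h
    set M := Finset.sup (Finset.range P) B with hM
    obtain ⟨ρ, hρP, hnD, z, hzy, hsk⟩ := h1 M
    have hBM : B ρ ≤ M := Finset.le_sup (Finset.mem_range.mpr hρP)
    exact hB ρ hρP hnD z (fun i hi => hzy i (le_trans hi hBM)) hsk
  obtain ⟨ρ, hρP, hnD, hwit⟩ := h2
  have hySk : Sk y P y ρ := by
    have hycl : y ∈ closure {z : ℕ → 𝒜 | Sk y P z ρ} := by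
      rw [mem_closure_iff_cyl]
      intro N
      obtain ⟨z, hzy, hsk⟩ := hwit N
      exact ⟨z, hsk, hzy⟩
    rwa [(sk_closed ρ).closure_eq] at hycl
  have hDn : Dp y P (n % P) := fun k => hper (n % P) (Nat.mod_le n P) k
  set φ : ℕ → ℕ := fun c => (c + (P - ρ % P)) % P with hφ
  have e1 : ∀ c < P, (φ c + ρ) % P = c := by
    intro c hc
    have hr : ρ % P < P := Nat.mod_lt _ hP
    show ((c + (P - ρ % P)) % P + ρ) % P = c
    rw [Nat.mod_add_mod]
    have hmodeq : c + (P - ρ % P) + ρ ≡ c + (P - ρ % P) + ρ % P [MOD P] :=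
      Nat.ModEq.add_left _ (Nat.mod_modEq ρ P).symm
    have hstep : c + (P - ρ % P) + ρ % P = c + P := by omega
    calc (c + (P - ρ % P) + ρ) % P = (c + (P - ρ % P) + ρ % P) % P := hmodeq
      _ = (c + P) % P := by rw [hstep]
      _ = c % P := by rw [Nat.add_mod_right]
      _ = c := Nat.mod_eq_of_lt hc
  -- φ maps periodic residues to periodic residues
  have hφD : ∀ c < P, Dp y P c → Dp y P (φ c) := by
    intro c hc hcD
    have hval : ∀ k : ℕ, y (φ c + k * P) = y c := by
      intro k
      have hcov : ((φ c + k * P) + ρ) % P = c := by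
        rw [show φ c + k * P + ρ = (φ c + ρ) + k * P from by ring,
          Nat.add_mul_mod_self_right, e1 c hc]
      have := hySk (φ c + k * P) (by rw [hcov]; exact hcD)
      rw [this, hcov]
    intro k
    rw [hval k, ← hval 0]
    simp
  have hφinj : ∀ c₁ < P, ∀ c₂ < P, φ c₁ = φ c₂ → c₁ = c₂ := by
    intro c₁ h₁ c₂ h₂ he
    rw [← e1 c₁ h₁, ← e1 c₂ h₂, he]
  -- finite injective self-map is surjective
  set S : Finset ℕ := (Finset.range P).filter (fun c => Dp y P c) with hS
  have hmaps : ∀ c ∈ S, φ c ∈ S := by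
    intro c hc
    rw [hS, Finset.mem_filter, Finset.mem_range] at hc ⊢
    exact ⟨Nat.mod_lt _ hP, hφD c hc.1 hc.2⟩
  have himage : S.image φ = S := by
    apply Finset.eq_of_subset_of_card_le
    · intro x hx
      obtain ⟨c, hc, rfl⟩ := Finset.mem_image.mp hx
      exact hmaps c hc
    · rw [Finset.card_image_of_injOn]
      intro c₁ h₁ c₂ h₂
      rw [hS, Finset.mem_coe, Finset.mem_filter, Finset.mem_range] at h₁ h₂
      exact hφinj c₁ h₁.1 c₂ h₂.1
  have hnS : n % P ∈ S := by
    rw [hS, Finset.mem_filter, Finset.mem_range]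
    exact ⟨Nat.mod_lt _ hP, hDn⟩
  rw [← himage] at hnS
  obtain ⟨c, hcS, hcφ⟩ := Finset.mem_image.mp hnS
  rw [hS, Finset.mem_filter, Finset.mem_range] at hcS
  apply hnD
  have hfin : (n + ρ) % P = c := by
    rw [← e1 c hcS.1, hcφ, Nat.mod_add_mod]
  rw [hfin]
  exact hcS.2

end ToepAux

open ToepAux in
/-- For a Toeplitz sequence `ω`, the set of Toeplitz sequences in `Z(ω,σ)` is a
residual subset of the space `Z(ω,σ)`: a countable intersection of open sets (a Gδ)
that is dense. -/
theorem stmt12 {𝒜 : Type*} [Fintype 𝒜] [Nonempty 𝒜] [TopologicalSpace 𝒜] [DiscreteTopology 𝒜]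
    (ω : ℕ → 𝒜) (hT : IsToeplitz ω) :
    IsGδ {x : ↥(orbitClosure ω) | IsToeplitz (x : ℕ → 𝒜)} ∧
    Dense {x : ↥(orbitClosure ω) | IsToeplitz (x : ℕ → 𝒜)} := by
  constructor
  · -- Gδ
    have hset : {x : ↥(orbitClosure ω) | IsToeplitz (x : ℕ → 𝒜)} =
        ⋂ n : ℕ, interior {x : ↥(orbitClosure ω) |
          ∃ p : ℕ, 0 < p ∧ ∀ k : ℕ, 0 < k → (x : ℕ → 𝒜) (n + k * p) = (x : ℕ → 𝒜) n} := by
      ext x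
      simp only [Set.mem_setOf_eq, Set.mem_iInter]
      constructor
      · intro hx n
        obtain ⟨L, hL⟩ := main_open hT x.2 hx n
        rw [mem_interior]
        refine ⟨Subtype.val ⁻¹' {y : ℕ → 𝒜 | ∀ i ≤ L, y i = (x : ℕ → 𝒜) i}, ?_, ?_, ?_⟩
        · intro w hw
          exact hL (w : ℕ → 𝒜) w.2 hw
        · exact (isOpen_cyl _ L).preimage continuous_subtype_val
        · intro i _
          rfl
      · intro hx n
        exact interior_subset
          (s := {x : ↥(orbitClosure ω) | ∃ p : ℕ, 0 < p ∧ ∀ k : ℕ, 0 < k →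
            (x : ℕ → 𝒜) (n + k * p) = (x : ℕ → 𝒜) n}) (hx n)
    rw [hset]
    exact .iInter fun n => IsOpen.isGδ isOpen_interior
  · -- dense
    rw [dense_iff_inter_open]
    intro U hU hUne
    obtain ⟨V, hV, rfl⟩ := isOpen_induced_iff.1 hU
    obtain ⟨x, hx⟩ := hUne
    have hxc : (x : ℕ → 𝒜) ∈ closure {y | ∃ m : ℕ, shift^[m] ω = y} := x.2
    obtain ⟨w, hwV, hwOrb⟩ := _root_.mem_closure_iff.1 hxc V hV hx
    obtain ⟨m, rfl⟩ := hwOrb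
    refine ⟨⟨shift^[m] ω, subset_closure ⟨m, rfl⟩⟩, hwV, ?_⟩
    exact isToeplitz_shift_iterate hT m
end

section
/- Let 𝒜 be a nonempty finite alphabet, let ω be a Toeplitz sequence over 𝒜, and let p ∈ EP(ω). Then there exists a continuous surjection f : Z(ω,σ) → ℤ/pℤ such that f(σx) = f(x) + 1 for all x ∈ Z(ω,σ); that is, the cyclic permutation of order p is a continuous factor of the subshift σ|_{Z(ω,σ)}, so EP(ω) ⊆ CF(σ|_{Z(ω,σ)}). -/
/-- `p ≥ 1` is an essential partial period of `x` if there is a position `m` with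
`x(m+kp) = x(m)` for all `k ≥ 1`, while for every `1 ≤ p' < p` some `k ≥ 1` has
`x(m+kp') ≠ x(m)`. -/
def EP {𝒜 : Type*} (x : ℕ → 𝒜) : Set ℕ :=
  {p | 0 < p ∧ ∃ m : ℕ, (∀ k : ℕ, 0 < k → x (m + k * p) = x m) ∧
    ∀ p' : ℕ, 0 < p' → p' < p → ∃ k : ℕ, 0 < k ∧ x (m + k * p') ≠ x m}

lemma continuous_shift {𝒜 : Type*} [TopologicalSpace 𝒜] :
    Continuous (shift : (ℕ → 𝒜) → (ℕ → 𝒜)) :=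
  continuous_pi fun n => continuous_apply (n + 1)

lemma shift_mapsTo {𝒜 : Type*} [TopologicalSpace 𝒜] (ω : ℕ → 𝒜) :
    Set.MapsTo shift (orbitClosure ω) (orbitClosure ω) := by
  have h : Set.MapsTo (shift (𝒜 := 𝒜)) {y | ∃ n : ℕ, shift^[n] ω = y}
      {y | ∃ n : ℕ, shift^[n] ω = y} := by
    rintro y ⟨n, rfl⟩
    exact ⟨n + 1, Function.iterate_succ_apply' shift n ω⟩
  exact h.closure continuous_shift

/-- The subshift `σ|_{Z(ω,σ)}`, as a self-map of the subspace `Z(ω,σ)`. -/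
def shiftZ {𝒜 : Type*} [TopologicalSpace 𝒜] (ω : ℕ → 𝒜) :
    ↥(orbitClosure ω) → ↥(orbitClosure ω) :=
  Set.MapsTo.restrict shift _ _ (shift_mapsTo ω)

/-- `CF(T)`: the set of `n ≥ 1` such that the cyclic permutation of order `n` is a
continuous factor of `T`, i.e. there is a continuous surjection `f : X → ℤ/nℤ` with
`f(Tx) = f(x) + 1`. -/
def CF {X : Type*} [TopologicalSpace X] (T : X → X) : Set ℕ :=
  {n | 0 < n ∧ ∃ f : X → ZMod n,
    Continuous f ∧ Function.Surjective f ∧ ∀ x, f (T x) = f x + 1}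

section Aux

lemma shift_iter {𝒜 : Type*} : ∀ (n : ℕ) (ω : ℕ → 𝒜) (i : ℕ), shift^[n] ω i = ω (n + i)
  | 0, ω, i => by simp
  | n+1, ω, i => by
    rw [Function.iterate_succ_apply, shift_iter n]
    show ω (n + i + 1) = ω (n + 1 + i)
    congr 1; omega

lemma full_prog {𝒜 : Type*} (ω : ℕ → 𝒜) (hT : IsToeplitz ω) {p m : ℕ} (hp : 0 < p)
    (hm : ∀ k : ℕ, 0 < k → ω (m + k * p) = ω m) :
    ∀ y : ℕ, (p : ℤ) ∣ (y : ℤ) - m → ω y = ω m := by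
  intro y hy
  obtain ⟨q, hq0, hq⟩ := hT y
  set z := y + (p * (m + 1)) * q with hz
  have h1 : ω z = ω y := hq _ (by positivity)
  have hzm : m < z := by
    have h2 : m + 1 ≤ p * (m + 1) * q := by
      calc m + 1 ≤ (p * (m+1)) * 1 := by nlinarith
        _ ≤ p * (m+1) * q := by exact Nat.mul_le_mul_left _ hq0
    omega
  have hdvd : (p:ℤ) ∣ (z:ℤ) - m := by
    have h3 : (z:ℤ) - m = ((y:ℤ) - m) + p * ((m+1)*q) := by rw [hz]; push_cast; ring
    rw [h3]; exact dvd_add hy ⟨_, rfl⟩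
  have hle : m ≤ z := hzm.le
  have hdn : p ∣ z - m := by zify [hle]; exact hdvd
  have hk0 : 0 < (z - m) / p := Nat.div_pos (Nat.le_of_dvd (by omega) hdn) hp
  have hzz : z = m + ((z - m) / p) * p := by
    rw [Nat.div_mul_cancel hdn]; omega
  rw [← h1, hzz]
  exact hm _ hk0

lemma key_lemma {𝒜 : Type*} (ω : ℕ → 𝒜) (hT : IsToeplitz ω) {p : ℕ} (hp : p ∈ EP ω) :
    ∃ L : ℕ, ∀ n d : ℕ, (∀ i, i < L → ω (n + i) = ω (n + d + i)) → p ∣ d := by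
  obtain ⟨hp0, m, hm, hess⟩ := hp
  by_contra hcon
  push_neg at hcon
  choose N D hA hD using hcon
  obtain ⟨e, he⟩ := Finite.exists_infinite_fiber
    (fun L => (⟨D L % p, Nat.mod_lt _ hp0⟩ : Fin p))
  have heinf : Set.Infinite
      ((fun L => (⟨D L % p, Nat.mod_lt _ hp0⟩ : Fin p)) ⁻¹' {e}) :=
    Set.infinite_coe_iff.mp he
  set eN := (e : Fin p).1 with heN
  have H : ∀ L₀ : ℕ, ∃ L, L₀ ≤ L ∧ D L % p = eN := by
    intro L₀
    obtain ⟨L, hLmem, hLlt⟩ := heinf.exists_gt L₀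
    refine ⟨L, hLlt.le, ?_⟩
    have h4 : (⟨D L % p, Nat.mod_lt _ hp0⟩ : Fin p) = e := hLmem
    exact congrArg Fin.val h4
  have heN0 : 0 < eN := by
    obtain ⟨L, _, hLe⟩ := H 0
    rcases Nat.eq_zero_or_pos eN with h0 | h
    · exact absurd (Nat.dvd_of_mod_eq_zero (hLe.trans h0)) (hD L)
    · exact h
  have heNlt : eN < p := (e : Fin p).2
  have Ct : ∀ t : ℕ, ∀ y : ℕ, (p : ℤ) ∣ (y : ℤ) - m - t * eN → ω y = ω m := by
    intro t
    induction t with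
    | zero =>
      intro y hy
      exact full_prog ω hT hp0 hm y (by simpa using hy)
    | succ t ih =>
      intro y hy
      obtain ⟨qy, hqy0, hqy⟩ := hT y
      set P := p * qy with hP
      have hP0 : 0 < P := Nat.mul_pos hp0 hqy0
      obtain ⟨L, hLge, hLe⟩ := H (y + 2 * P + 1)
      have hagree := hA L
      set n := N L with hn
      set d := D L with hd
      set A := n + L - 1 + d with hAdef
      have hyA : y + 2 * P ≤ A := by omega
      set Dm := (A - y) % P with hDm
      have hDmP : Dm < P := Nat.mod_lt _ hP0
      set c := (A - y) / P with hc
      have hdiv : A - y = P * c + Dm := (Nat.div_add_mod (A - y) P).symm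
      obtain ⟨M, hM⟩ : ∃ M, P * c = M := ⟨_, rfl⟩
      rw [hM] at hdiv
      have hc0 : 0 < c := by
        rcases Nat.eq_zero_or_pos c with h0 | h
        · rw [h0, Nat.mul_zero] at hM; omega
        · exact h
      set i := L - 1 - Dm with hi
      have hiL : i < L := by omega
      set x := n + i with hx
      have hzA : x + d = y + M := by omega
      have hωz : ω (x + d) = ω y := by
        rw [hzA]
        have h5 : y + M = y + (p * c) * qy := by rw [← hM, hP]; ring
        rw [h5]
        exact hqy _ (Nat.mul_pos hp0 hc0)
      have hωxz : ω x = ω (x + d) := by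
        have h6 := hagree i hiL
        rwa [show n + d + i = x + d by omega] at h6
      have hωx : ω x = ω m := by
        apply ih
        have hde : (p:ℤ) ∣ (d:ℤ) - eN := by
          apply Int.dvd_self_sub_of_emod_eq
          rw [← Int.natCast_mod]
          exact_mod_cast hLe
        have hzy : (p:ℤ) ∣ ((x:ℤ) + d) - y := by
          have h8 : (x:ℤ) + d = y + M := by exact_mod_cast congrArg (Nat.cast : ℕ → ℤ) hzA
          have h9 : (M:ℤ) = p * ((qy:ℤ) * c) := by rw [← hM, hP]; push_cast; ring
          exact ⟨(qy:ℤ) * c, by rw [h8, h9]; ring⟩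
        have h10 : (x:ℤ) - m - t * eN =
            ((y:ℤ) - m - (t+1) * eN) + (((x:ℤ) + d) - y) - ((d:ℤ) - eN) := by
          ring
        rw [h10]
        exact dvd_sub (dvd_add hy hzy) hde
      rw [← hωz, ← hωxz, hωx]
  set g := Nat.gcd eN p with hg
  have hg0 : 0 < g := Nat.gcd_pos_of_pos_left _ heN0
  have hgp : g < p := lt_of_le_of_lt (Nat.le_of_dvd heN0 (Nat.gcd_dvd_left _ _)) heNlt
  obtain ⟨k, hk0, hk⟩ := hess g hg0 hgp
  apply hk
  have hbez : (g:ℤ) = eN * Nat.gcdA eN p + p * Nat.gcdB eN p := Nat.gcd_eq_gcd_ab eN p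
  set t : ℤ := (k * Nat.gcdA eN p) % p with ht
  have ht0 : 0 ≤ t := Int.emod_nonneg _ (by exact_mod_cast hp0.ne')
  apply Ct t.toNat
  have htt : (t.toNat : ℤ) = t := Int.toNat_of_nonneg ht0
  have hdvd1 : (p:ℤ) ∣ (k * Nat.gcdA eN p - t) := Int.dvd_self_sub_of_emod_eq rfl
  have h11 : ((m + k * g : ℕ):ℤ) - m - t.toNat * eN =
      eN * (k * Nat.gcdA eN p - t) + p * (k * Nat.gcdB eN p) := by
    rw [htt]; push_cast
    linear_combination (k:ℤ) * hbez
  rw [h11]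
  exact dvd_add (Dvd.dvd.mul_left hdvd1 _) ⟨_, rfl⟩

end Aux

/-- Every essential partial period `p` of a Toeplitz sequence `ω` gives a cyclic
permutation of order `p` as a continuous factor of the subshift `σ|_{Z(ω,σ)}`;
that is, `EP(ω) ⊆ CF(σ|_{Z(ω,σ)})`. -/
theorem stmt13 {𝒜 : Type*} [Fintype 𝒜] [Nonempty 𝒜] [TopologicalSpace 𝒜] [DiscreteTopology 𝒜]
    (ω : ℕ → 𝒜) (hT : IsToeplitz ω) (p : ℕ) (hp : p ∈ EP ω) :
    p ∈ CF (shiftZ ω) := by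
  obtain ⟨L, hL⟩ := key_lemma ω hT hp
  have hp0 : 0 < p := hp.1
  haveI : NeZero p := ⟨hp0.ne'⟩
  have modeq : ∀ n n' : ℕ, (∀ i, i < L → ω (n + i) = ω (n' + i)) →
      ((n : ZMod p) = (n' : ZMod p)) := by
    intro n n' h
    rcases le_total n n' with hle | hle
    · obtain ⟨d, rfl⟩ := Nat.exists_eq_add_of_le hle
      obtain ⟨c, rfl⟩ := hL n d (fun i hi => h i hi)
      push_cast
      simp [ZMod.natCast_self]
    · obtain ⟨d, rfl⟩ := Nat.exists_eq_add_of_le hle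
      obtain ⟨c, rfl⟩ := hL n' d (fun i hi => (h i hi).symm)
      push_cast
      simp [ZMod.natCast_self]
  have hcyl : ∀ (w : ℕ → 𝒜) (l : ℕ), IsOpen {y : ℕ → 𝒜 | ∀ i, i < l → y i = w i} := by
    intro w l
    have h1 : {y : ℕ → 𝒜 | ∀ i, i < l → y i = w i} =
        ⋂ i : Fin l, {y : ℕ → 𝒜 | y (i : ℕ) = w (i : ℕ)} := by
      ext y
      simp only [Set.mem_setOf_eq, Set.mem_iInter]
      exact ⟨fun h i => h i i.2, fun h i hi => h ⟨i, hi⟩⟩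
    rw [h1]
    refine isOpen_iInter_of_finite fun i => ?_
    have h2 : {y : ℕ → 𝒜 | y (i : ℕ) = w (i : ℕ)} =
        (fun y : ℕ → 𝒜 => y (i : ℕ)) ⁻¹' {w (i : ℕ)} := rfl
    rw [h2]
    exact IsOpen.preimage (continuous_apply (i : ℕ)) (isOpen_discrete _)
  have appro : ∀ x ∈ orbitClosure ω, ∀ l : ℕ, ∃ n : ℕ, ∀ i, i < l → ω (n + i) = x i := by
    intro x hx l
    have hxU : x ∈ {y : ℕ → 𝒜 | ∀ i, i < l → y i = x i} := fun i _ => rfl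
    obtain ⟨y, hy1, n, rfl⟩ := mem_closure_iff.mp hx _ (hcyl x l) hxU
    exact ⟨n, fun i hi => by rw [← hy1 i hi, shift_iter]⟩
  choose F hF using fun x : ↥(orbitClosure ω) => appro x.1 x.2 (L + 1)
  refine ⟨hp0, fun x => (F x : ZMod p), ?_, ?_, ?_⟩
  · apply IsLocallyConstant.continuous
    rw [IsLocallyConstant.iff_exists_open]
    intro x
    refine ⟨Subtype.val ⁻¹' {y : ℕ → 𝒜 | ∀ i, i < L + 1 → y i = x.1 i},
      (hcyl x.1 (L+1)).preimage continuous_subtype_val, fun i _ => rfl, ?_⟩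
    intro x' hx'
    refine modeq _ _ fun i hi => ?_
    rw [hF x' i (by omega), hF x i (by omega)]
    exact hx' i (by omega)
  · intro r
    refine ⟨⟨shift^[r.val] ω, subset_closure ⟨r.val, rfl⟩⟩, ?_⟩
    have h1 : ∀ i, i < L → ω (F ⟨shift^[r.val] ω, subset_closure ⟨r.val, rfl⟩⟩ + i)
        = ω (r.val + i) := by
      intro i hi
      rw [hF _ i (by omega)]
      exact shift_iter r.val ω i
    exact (modeq _ _ h1).trans (ZMod.natCast_rightInverse r)
  · intro x
    have hx1 : ∀ i, i < L → ω (F (shiftZ ω x) + i) = ω ((F x + 1) + i) := by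
      intro i hi
      have h1 : ω (F (shiftZ ω x) + i) = (shiftZ ω x).1 i := hF _ i (by omega)
      have h2 : (shiftZ ω x).1 i = x.1 (i + 1) := rfl
      have h3 : ω (F x + (i + 1)) = x.1 (i + 1) := hF x (i + 1) (by omega)
      rw [h1, h2, ← h3]
      congr 1
      omega
    have h4 := modeq _ _ hx1
    rw [show ((F x + 1 : ℕ) : ZMod p) = (F x : ZMod p) + 1 by push_cast; ring] at h4
    exact h4
end

section
/- Let 𝒜 be a nonempty finite alphabet and let ω be a Toeplitz sequence over 𝒜. Then a positive integer n belongs to CF(σ|_{Z(ω,σ)}) if and only if there exist finitely many essential partial periods n₁, n₂, …, n_k ∈ EP(ω) such that n divides lcm(n₁, n₂, …, n_k). -/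
set_option linter.unusedSectionVars false

section aux
variable {𝒜 : Type*}

lemma shift_iterate (x : ℕ → 𝒜) (j i : ℕ) : (shift^[j] x) i = x (i + j) := by
  induction j generalizing x with
  | zero => rfl
  | succ j ih =>
    rw [Function.iterate_succ_apply, ih]
    rfl

def Orb (ω : ℕ → 𝒜) (p : ℕ) (c : ZMod p) : Set (ℕ → 𝒜) :=
  {y | ∃ j : ℕ, (j : ZMod p) = c ∧ shift^[j] ω = y}

lemma decompose {ω : ℕ → 𝒜} {p m Q : ℕ} (H1 : ∀ k, 0 < k → ω (m + k * p) = ω m)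
    (hle : m ≤ Q) (hmod : (Q : ZMod p) = (m : ZMod p)) : ω Q = ω m := by
  have h := (ZMod.natCast_eq_natCast_iff _ _ _).mp hmod
  obtain ⟨k, hk⟩ := (Nat.modEq_iff_dvd' hle).mp h.symm
  have hQ : Q = p * k + m := (Nat.sub_eq_iff_eq_add hle).mp hk
  rcases Nat.eq_zero_or_pos k with hk0 | hk0
  · rw [hQ, hk0]; simp
  · rw [hQ]
    have hcomm : p * k + m = m + k * p := by ring
    rw [hcomm]; exact H1 k hk0

variable [TopologicalSpace 𝒜] [DiscreteTopology 𝒜]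

def AbZ (ω : ℕ → 𝒜) (p : ℕ) (c : ZMod p) : Set (ℕ → 𝒜) := closure (Orb ω p c)

lemma mem_AbZ_coord {ω : ℕ → 𝒜} {p m : ℕ} (H1 : ∀ k, 0 < k → ω (m + k * p) = ω m)
    {c : ZMod p} {y : ℕ → 𝒜} (hy : y ∈ AbZ ω p c) {i : ℕ} (hi : m ≤ i)
    (hres : (i : ZMod p) = (m : ZMod p) - c) : y i = ω m := by
  have hclosed : IsClosed {z : ℕ → 𝒜 |
      ∀ i : ℕ, m ≤ i → (i : ZMod p) = (m : ZMod p) - c → z i = ω m} := by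
    have heq : {z : ℕ → 𝒜 | ∀ i : ℕ, m ≤ i → (i : ZMod p) = (m : ZMod p) - c → z i = ω m}
        = ⋂ i : ℕ, ⋂ (_ : m ≤ i), ⋂ (_ : (i : ZMod p) = (m : ZMod p) - c),
          (fun z : ℕ → 𝒜 => z i) ⁻¹' {ω m} := by
      ext z; simp [Set.mem_iInter]
    rw [heq]
    exact isClosed_iInter fun i => isClosed_iInter fun _ => isClosed_iInter fun _ =>
      IsClosed.preimage (continuous_apply i) isClosed_singleton
  have hsub : Orb ω p c ⊆ {z : ℕ → 𝒜 |
      ∀ i : ℕ, m ≤ i → (i : ZMod p) = (m : ZMod p) - c → z i = ω m} := by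
    rintro z ⟨j, hj, rfl⟩ i him hresi
    rw [shift_iterate]
    apply decompose H1 (le_trans him (Nat.le_add_right i j))
    push_cast
    rw [hresi, hj]; ring
  exact closure_minimal hsub hclosed hy i hi hres

lemma class_const {ω : ℕ → 𝒜} (hT : IsToeplitz ω) {p m : ℕ} (hp : 0 < p)
    (H1 : ∀ k, 0 < k → ω (m + k * p) = ω m) {q : ℕ}
    (hq : (q : ZMod p) = (m : ZMod p)) : ω q = ω m := by
  obtain ⟨u, hu, hper⟩ := hT q
  have h1 : ω (q + (p * (m + 1)) * u) = ω q := hper _ (by positivity)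
  have h3 : m + 1 ≤ p * (m + 1) * u := by
    calc m + 1 = 1 * (m + 1) * 1 := by ring
    _ ≤ p * (m + 1) * u := Nat.mul_le_mul (Nat.mul_le_mul hp le_rfl) hu
  have h2 : ω (q + (p * (m + 1)) * u) = ω m := by
    apply decompose H1 (by omega)
    push_cast
    rw [ZMod.natCast_self, hq]; ring
  rw [← h1, h2]

lemma key_step {ω : ℕ → 𝒜} (hT : IsToeplitz ω) {p m : ℕ} (hp : 0 < p)
    (H1 : ∀ k, 0 < k → ω (m + k * p) = ω m) {c c' : ZMod p} {y : ℕ → 𝒜}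
    (hyc : y ∈ AbZ ω p c) (hyc' : y ∈ AbZ ω p c') {q : ℕ}
    (hq : (q : ZMod p) = (m : ZMod p) + c' - c) : ω q = ω m := by
  obtain ⟨u, hu, hper⟩ := hT q
  set U := u * p with hUdef
  have hU : 0 < U := Nat.mul_pos hu hp
  set N := q + m + 2 * U with hNdef
  have hopen : IsOpen {z : ℕ → 𝒜 | ∀ i : Fin (N + 1), z i = y i} := by
    have heq : {z : ℕ → 𝒜 | ∀ i : Fin (N + 1), z i = y i}
        = ⋂ i : Fin (N + 1), (fun z : ℕ → 𝒜 => z i) ⁻¹' {y i} := by ext z; simp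
    rw [heq]
    exact isOpen_iInter_of_finite fun i =>
      IsOpen.preimage (continuous_apply _) (isOpen_discrete _)
  obtain ⟨z, hzcyl, j, hj, rfl⟩ :=
    mem_closure_iff.mp hyc' _ hopen (fun i => rfl)
  have hKex : ∃ K : ℕ, (∃ k0 : ℕ, 0 < k0 ∧ K = k0 * U) ∧ j + m + U < K ∧ K ≤ j + m + 2 * U := by
    refine ⟨((j + m) / U + 2) * U, ⟨(j + m) / U + 2, by positivity, rfl⟩, ?_, ?_⟩
    · have h1 := Nat.div_add_mod (j + m) U
      have h2 := Nat.mod_lt (j + m) hU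
      have h3 : ((j + m) / U + 2) * U = U * ((j + m) / U) + U + U := by ring
      linarith
    · have h4 : (j + m) / U * U ≤ j + m := Nat.div_mul_le_self _ _
      have h3 : ((j + m) / U + 2) * U = (j + m) / U * U + U + U := by ring
      linarith
  obtain ⟨K, ⟨k0, hk00, hk0K⟩, hK1, hK2⟩ := hKex
  set i := q + K - j with hidef
  have hij : j + i = q + K := by omega
  have him : m ≤ i := by omega
  have hiN : i ≤ N := by omega
  have hval1 : ω (q + K) = ω q := by
    have hrw : q + K = q + (k0 * p) * u := by rw [hk0K, hUdef]; ring
    rw [hrw]; exact hper _ (by positivity)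
  have hKzero : (K : ZMod p) = 0 := by
    rw [hk0K, hUdef]; push_cast; rw [ZMod.natCast_self]; ring
  have hji_cast : (j : ZMod p) + (i : ZMod p) = (q : ZMod p) := by
    have h := congrArg (Nat.cast : ℕ → ZMod p) hij
    push_cast at h
    rw [hKzero, add_zero] at h
    exact h
  have hres_i : (i : ZMod p) = (m : ZMod p) - c := by
    have h : (i : ZMod p) = (q : ZMod p) - (j : ZMod p) := by
      linear_combination hji_cast
    rw [h, hq, hj]; ring
  have hyi : y i = ω m := mem_AbZ_coord H1 hyc him hres_i
  have hzi : (shift^[j] ω) i = y i := hzcyl ⟨i, by omega⟩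
  rw [shift_iterate] at hzi
  calc ω q = ω (q + K) := hval1.symm
    _ = ω (i + j) := by congr 1; omega
    _ = y i := hzi
    _ = ω m := hyi

lemma class_const_iter {ω : ℕ → 𝒜} (hT : IsToeplitz ω) {p m : ℕ} (hp : 0 < p)
    (H1 : ∀ k, 0 < k → ω (m + k * p) = ω m) {c c' : ZMod p} {y : ℕ → 𝒜}
    (hyc : y ∈ AbZ ω p c) (hyc' : y ∈ AbZ ω p c') :
    ∀ t : ℕ, ∀ q : ℕ, (q : ZMod p) = (m : ZMod p) + (t : ZMod p) * (c' - c) → ω q = ω m := by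
  haveI : NeZero p := ⟨hp.ne'⟩
  intro t
  induction t with
  | zero =>
    intro q hqr
    apply class_const hT hp H1
    simpa using hqr
  | succ t ih =>
    intro q hqr
    set mt := ((m : ZMod p) + (t : ZMod p) * (c' - c)).val with hmtdef
    have hmtcast : (mt : ZMod p) = (m : ZMod p) + (t : ZMod p) * (c' - c) :=
      ZMod.natCast_zmod_val _
    have hmt_eq : ω mt = ω m := ih mt hmtcast
    have H1t : ∀ k, 0 < k → ω (mt + k * p) = ω mt := by
      intro k hk
      rw [hmt_eq]
      apply ih
      push_cast
      rw [ZMod.natCast_self, hmtcast]; ring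
    have hkey := key_step hT hp H1t hyc hyc' (q := q)
      (by rw [hqr, hmtcast]; push_cast; ring)
    rw [hkey, hmt_eq]

lemma Ab_disjoint {ω : ℕ → 𝒜} (hT : IsToeplitz ω) {p : ℕ} (hpEP : p ∈ EP ω)
    {c c' : ZMod p} (hne : c ≠ c') {y : ℕ → 𝒜}
    (hyc : y ∈ AbZ ω p c) (hyc' : y ∈ AbZ ω p c') : False := by
  obtain ⟨hp, m, H1, Hess⟩ := hpEP
  haveI : NeZero p := ⟨hp.ne'⟩
  set d := c' - c with hddef
  have hd : d ≠ 0 := sub_ne_zero.mpr (Ne.symm hne)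
  set D := d.val with hDdef
  have hD0 : 0 < D := Nat.pos_of_ne_zero (fun h => hd ((ZMod.val_eq_zero d).mp h))
  have hDlt : D < p := ZMod.val_lt d
  set g := Nat.gcd D p with hgdef
  have hg0 : 0 < g := Nat.gcd_pos_of_pos_left _ hD0
  have hglt : g < p := lt_of_le_of_lt (Nat.le_of_dvd hD0 (Nat.gcd_dvd_left D p)) hDlt
  obtain ⟨k, hk0, hkne⟩ := Hess g hg0 hglt
  apply hkne
  have hbez : (g : ℤ) = D * Nat.gcdA D p + p * Nat.gcdB D p := Nat.gcd_eq_gcd_ab D p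
  have hgcast : (g : ZMod p) = (D : ZMod p) * ((Nat.gcdA D p : ℤ) : ZMod p) := by
    have h := congrArg (Int.cast : ℤ → ZMod p) hbez
    push_cast at h
    rw [ZMod.natCast_self] at h
    simpa using h
  have hDd : (D : ZMod p) = d := ZMod.natCast_zmod_val d
  apply class_const_iter hT hp H1 hyc hyc'
    (((k : ZMod p) * ((Nat.gcdA D p : ℤ) : ZMod p)).val)
  push_cast
  rw [ZMod.natCast_zmod_val, hgcast, hDd]
  ring

end aux

section aux2
variable {𝒜 : Type*} [TopologicalSpace 𝒜] [DiscreteTopology 𝒜]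

lemma orbitClosure_subset_union (ω : ℕ → 𝒜) {p : ℕ} (hp : 0 < p) :
    orbitClosure ω ⊆ ⋃ c : ZMod p, AbZ ω p c := by
  haveI : NeZero p := ⟨hp.ne'⟩
  apply closure_minimal
  · rintro y ⟨j, rfl⟩
    exact Set.mem_iUnion.mpr ⟨(j : ZMod p), subset_closure ⟨j, rfl, rfl⟩⟩
  · exact isClosed_iUnion_of_finite fun c => isClosed_closure

lemma shift_AbZ {ω : ℕ → 𝒜} {p : ℕ} {c : ZMod p} {y : ℕ → 𝒜} (hy : y ∈ AbZ ω p c) :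
    shift y ∈ AbZ ω p (c + 1) := by
  have h1 : shift y ∈ shift '' AbZ ω p c := ⟨y, hy, rfl⟩
  have h2 : shift '' AbZ ω p c ⊆ closure (shift '' Orb ω p c) :=
    image_closure_subset_closure_image continuous_shift
  refine closure_mono ?_ (h2 h1)
  rintro z ⟨w, ⟨j, hj, rfl⟩, rfl⟩
  exact ⟨j + 1, by push_cast; rw [hj], Function.iterate_succ_apply' shift j ω⟩

lemma AbZ_subset_of_dvd {ω : ℕ → 𝒜} {p L : ℕ} (hdvd : p ∣ L) (c : ZMod L) :
    AbZ ω L c ⊆ AbZ ω p (ZMod.castHom hdvd (ZMod p) c) := by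
  apply closure_mono
  rintro z ⟨j, hj, rfl⟩
  refine ⟨j, ?_, rfl⟩
  rw [← hj]
  exact (map_natCast (ZMod.castHom hdvd (ZMod p)) j).symm

lemma lcm_posEP {ω : ℕ → 𝒜} {s : Finset ℕ} (hsub : ↑s ⊆ EP ω) : 0 < s.lcm id := by
  rcases Nat.eq_zero_or_pos (s.lcm id) with h | h
  · exfalso
    obtain ⟨a, ha, ha0⟩ := Finset.lcm_eq_zero_iff.mp h
    have h1 : 0 < a := (hsub ha).1
    have h2 : a = 0 := ha0
    omega
  · exact h

lemma AbZ_disjoint_lcm {ω : ℕ → 𝒜} (hT : IsToeplitz ω) {s : Finset ℕ}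
    (hsub : ↑s ⊆ EP ω) {c c' : ZMod (s.lcm id)} (hne : c ≠ c')
    {y : ℕ → 𝒜} (hyc : y ∈ AbZ ω (s.lcm id) c) (hyc' : y ∈ AbZ ω (s.lcm id) c') :
    False := by
  have hL : 0 < s.lcm id := lcm_posEP hsub
  haveI : NeZero (s.lcm id) := ⟨hL.ne'⟩
  have hvals : ∀ p ∈ s, p ∣ (c - c').val := by
    intro p hps
    have hdvd : p ∣ s.lcm id := Finset.dvd_lcm hps
    by_contra hndvd
    refine Ab_disjoint hT (hsub hps) (c := ZMod.castHom hdvd (ZMod p) c)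
      (c' := ZMod.castHom hdvd (ZMod p) c') ?_ (AbZ_subset_of_dvd hdvd c hyc)
      (AbZ_subset_of_dvd hdvd c' hyc')
    intro heq
    apply hndvd
    have h0 : ZMod.castHom hdvd (ZMod p) (c - c') = 0 := by rw [map_sub, heq, sub_self]
    rw [← ZMod.natCast_zmod_val (c - c'), map_natCast] at h0
    exact (ZMod.natCast_eq_zero_iff _ _).mp h0
  have hdvdL : s.lcm id ∣ (c - c').val := Finset.lcm_dvd hvals
  have hlt : (c - c').val < s.lcm id := ZMod.val_lt _
  exact hne (sub_eq_zero.mp ((ZMod.val_eq_zero _).mp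
    (Nat.eq_zero_of_dvd_of_lt hdvdL hlt)))

lemma lcm_mem_CF (ω : ℕ → 𝒜) (hT : IsToeplitz ω) {s : Finset ℕ}
    (hsub : ↑s ⊆ EP ω) : s.lcm id ∈ CF (shiftZ ω) := by
  classical
  have hL : 0 < s.lcm id := lcm_posEP hsub
  haveI : NeZero (s.lcm id) := ⟨hL.ne'⟩
  have hcov : ∀ y : ↥(orbitClosure ω), ∃ c : ZMod (s.lcm id),
      (y : ℕ → 𝒜) ∈ AbZ ω (s.lcm id) c := fun y =>
    Set.mem_iUnion.mp (orbitClosure_subset_union ω hL y.2)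
  set f : ↥(orbitClosure ω) → ZMod (s.lcm id) := fun y => Classical.choose (hcov y)
    with hfdef
  have hf : ∀ y, (y : ℕ → 𝒜) ∈ AbZ ω (s.lcm id) (f y) := fun y =>
    Classical.choose_spec (hcov y)
  have huniq : ∀ (y : ↥(orbitClosure ω)) (c : ZMod (s.lcm id)),
      (y : ℕ → 𝒜) ∈ AbZ ω (s.lcm id) c → f y = c := by
    intro y c hc
    by_contra hnef
    exact AbZ_disjoint_lcm hT hsub hnef (hf y) hc
  have hfiber : ∀ c : ZMod (s.lcm id),
      f ⁻¹' {c} = Subtype.val ⁻¹' (AbZ ω (s.lcm id) c) := by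
    intro c
    ext y
    simp only [Set.mem_preimage, Set.mem_singleton_iff]
    constructor
    · rintro rfl; exact hf y
    · intro h; exact huniq y c h
  have hfc_closed : ∀ c, IsClosed (f ⁻¹' {c}) := fun c => by
    rw [hfiber]
    exact IsClosed.preimage continuous_subtype_val isClosed_closure
  have hcont : Continuous f := by
    rw [continuous_discrete_rng]
    intro c
    refine isClosed_compl_iff.mp ?_
    have hcompl : (f ⁻¹' {c})ᶜ = ⋃ c' : {x : ZMod (s.lcm id) // x ≠ c},
        f ⁻¹' {(c' : ZMod (s.lcm id))} := by
      ext y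
      simp only [Set.mem_compl_iff, Set.mem_preimage, Set.mem_singleton_iff,
        Set.mem_iUnion]
      exact ⟨fun h => ⟨⟨f y, h⟩, rfl⟩, fun ⟨c', hc'⟩ h => c'.2 (by rw [← hc', h])⟩
    rw [hcompl]
    exact isClosed_iUnion_of_finite fun c' => hfc_closed _
  have hsurj : Function.Surjective f := by
    intro c
    refine ⟨⟨shift^[c.val] ω, subset_closure ⟨c.val, rfl⟩⟩, ?_⟩
    exact huniq _ c (subset_closure ⟨c.val, ZMod.natCast_zmod_val c, rfl⟩)
  have hequi : ∀ y, f (shiftZ ω y) = f y + 1 := by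
    intro y
    apply huniq
    have hval : ((shiftZ ω y : ℕ → 𝒜)) = shift (y : ℕ → 𝒜) :=
      Set.MapsTo.val_restrict_apply _ _
    rw [hval]
    exact shift_AbZ (hf y)
  exact ⟨hL, f, hcont, hsurj, hequi⟩

end aux2

lemma mem_CF_of_dvd {X : Type*} [TopologicalSpace X] {T : X → X} {n N : ℕ}
    (hn : 0 < n) (hdvd : n ∣ N) (hN : N ∈ CF T) : n ∈ CF T := by
  obtain ⟨hN0, f, hc, hs, he⟩ := hN
  haveI : NeZero n := ⟨hn.ne'⟩
  refine ⟨hn, (ZMod.castHom hdvd (ZMod n)) ∘ f, ?_, ?_, ?_⟩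
  · exact Continuous.comp continuous_of_discreteTopology hc
  · intro b
    obtain ⟨x, hx⟩ := hs ((b.val : ZMod N))
    refine ⟨x, ?_⟩
    rw [Function.comp_apply, hx, map_natCast, ZMod.natCast_zmod_val]
  · intro x
    rw [Function.comp_apply, Function.comp_apply, he x, map_add, map_one]


/-- For a Toeplitz sequence `ω`, a positive integer `n` belongs to
`CF(σ|_{Z(ω,σ)})` if and only if `n` divides the least common multiple of finitely
many essential partial periods of `ω`. -/
theorem stmt14 {𝒜 : Type*} [Fintype 𝒜] [Nonempty 𝒜] [TopologicalSpace 𝒜] [DiscreteTopology 𝒜]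
    (ω : ℕ → 𝒜) (hT : IsToeplitz ω) (n : ℕ) (hn : 0 < n) :
    n ∈ CF (shiftZ ω) ↔
      ∃ s : Finset ℕ, s.Nonempty ∧ ↑s ⊆ EP ω ∧ n ∣ s.lcm id := by
  classical
  constructor
  · rintro ⟨-, f, hc, -, he⟩
    have hmem : ∀ j : ℕ, shift^[j] ω ∈ orbitClosure ω := fun j => subset_closure ⟨j, rfl⟩
    set o : ℕ → ↥(orbitClosure ω) := fun j => ⟨shift^[j] ω, hmem j⟩ with hodef
    have hstep : ∀ j, shiftZ ω (o j) = o (j + 1) := by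
      intro j
      apply Subtype.ext
      show shift (shift^[j] ω) = shift^[j + 1] ω
      exact (Function.iterate_succ_apply' shift j ω).symm
    have hfo : ∀ j : ℕ, f (o j) = f (o 0) + j := by
      intro j
      induction j with
      | zero => simp
      | succ j ih => rw [← hstep, he, ih]; push_cast; ring
    have hopen : IsOpen (f ⁻¹' {f (o 0)}) := IsOpen.preimage hc (isOpen_discrete _)
    obtain ⟨V, hVopen, hVeq⟩ := isOpen_induced_iff.mp hopen
    have hωV : ω ∈ V := by
      have h1 : o 0 ∈ f ⁻¹' {f (o 0)} := rfl
      rw [← hVeq] at h1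
      exact h1
    obtain ⟨I, u, hu, hIu⟩ := isOpen_pi_iff.mp hVopen ω hωV
    have hEx : ∀ i : ℕ, ∃ p : ℕ, 0 < p ∧ ∀ k, 0 < k → ω (i + k * p) = ω i := hT
    set q : ℕ → ℕ := fun i => Nat.find (hEx i) with hqdef
    have hqspec : ∀ i, 0 < q i ∧ ∀ k, 0 < k → ω (i + k * q i) = ω i := fun i =>
      Nat.find_spec (hEx i)
    have hqEP : ∀ i, q i ∈ EP ω := by
      intro i
      refine ⟨(hqspec i).1, i, (hqspec i).2, ?_⟩
      intro p' hp'0 hp'lt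
      simp only [hqdef] at hp'lt
      have h := Nat.find_min (hEx i) hp'lt
      push_neg at h
      exact h hp'0
    set s' := insert (q 0) (I.image q) with hs'def
    have hsubEP : ↑s' ⊆ EP ω := by
      intro x hx
      simp only [hs'def, Finset.coe_insert, Set.mem_insert_iff, Finset.coe_image,
        Set.mem_image] at hx
      rcases hx with rfl | ⟨i, _, rfl⟩
      · exact hqEP 0
      · exact hqEP i
    refine ⟨s', Finset.insert_nonempty _ _, hsubEP, ?_⟩
    set L := s'.lcm id with hLdef
    have hLpos : 0 < L := lcm_posEP hsubEP
    have hagree : ∀ i ∈ I, (shift^[L] ω) i = ω i := by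
      intro i hi
      rw [shift_iterate]
      have hdvd : q i ∣ L := Finset.dvd_lcm (Finset.mem_insert_of_mem
        (Finset.mem_image_of_mem q hi))
      have hk : 0 < L / q i := Nat.div_pos (Nat.le_of_dvd hLpos hdvd) (hqspec i).1
      have hrw : i + L = i + (L / q i) * q i := by rw [Nat.div_mul_cancel hdvd]
      rw [hrw]
      exact (hqspec i).2 _ hk
    have hoLV : (shift^[L] ω) ∈ V := by
      apply hIu
      intro a ha
      rw [hagree a ha]
      exact (hu a ha).2
    have hfoL : f (o L) = f (o 0) := by
      have h1 : o L ∈ Subtype.val ⁻¹' V := hoLV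
      rw [hVeq] at h1
      exact h1
    rw [hfo L] at hfoL
    have hL0 : (L : ZMod n) = 0 := by
      have := hfoL
      rwa [add_eq_left] at this
    exact (ZMod.natCast_eq_zero_iff L n).mp hL0
  · rintro ⟨s, hsne, hsub, hdvd⟩
    exact mem_CF_of_dvd hn hdvd (lcm_mem_CF ω hT hsub)
end

section
/- Let X be a compact topological space, T : X → X a continuous map, and (n_i)_{i≥1} a sequence of positive integers. Suppose that for every k ≥ 1 there exists a continuous surjection f_k : X → ℤ/(n₁n₂⋯n_k)ℤ with f_k(Tx) = f_k(x) + 1 for all x ∈ X (i.e. T is a continuous extension of cyclic permutations of orders n₁, n₁n₂, n₁n₂n₃, …). Then T is a continuous extension of the odometer on ∏_{i≥1} ℤ/n_iℤ: there exists a continuous surjection F : X → ∏_{i≥1} ℤ/n_iℤ with F(Tx) = T₀(F(x)) for all x ∈ X, where T₀ is the odometer. -/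
open Finset

/-- `Pp n i = n 0 * n 1 * ⋯ * n (i-1)`. -/
def Pp (n : ℕ → ℕ) (i : ℕ) : ℕ := ∏ j ∈ Finset.range i, n j

lemma Pp_zero (n : ℕ → ℕ) : Pp n 0 = 1 := rfl

lemma Pp_succ (n : ℕ → ℕ) (i : ℕ) : Pp n (i + 1) = Pp n i * n i :=
  Finset.prod_range_succ n i

lemma Pp_pos {n : ℕ → ℕ} (hn : ∀ i, 0 < n i) (i : ℕ) : 0 < Pp n i :=
  Finset.prod_pos fun j _ => hn j

lemma Pp_dvd (n : ℕ → ℕ) {a b : ℕ} (hab : a ≤ b) : Pp n a ∣ Pp n b :=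
  Finset.prod_dvd_prod_of_subset _ _ _ (Finset.range_subset_range.2 hab)

/-- digit extraction through a mod, in `ZMod m`. -/
lemma dmod (P m : ℕ) (hP : 0 < P) (a : ℕ) :
    (((a % (P * m)) / P : ℕ) : ZMod m) = ((a / P : ℕ) : ZMod m) := by
  conv_rhs => rw [← Nat.div_add_mod a (P * m)]
  have h1 : P * m * (a / (P * m)) + a % (P * m) = P * (m * (a / (P * m))) + a % (P * m) := by
    ring
  rw [h1, Nat.mul_add_div hP]
  push_cast
  simp [ZMod.natCast_self]

lemma maxrep (a b : ℕ) (ha : 0 < a) (hb : 0 < b) :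
    a * b - 1 = (b - 1) * a + (a - 1) := by
  have e : (b - 1) * a = b * a - 1 * a := Nat.sub_mul b 1 a
  have e2 : a * b = b * a := mul_comm a b
  have e3 : a ≤ b * a := Nat.le_mul_of_pos_left a hb
  omega

/-- all low digits of `w` are maximal iff `w % Pp n i = Pp n i - 1`. -/
lemma all_max_iff {n : ℕ → ℕ} (hn : ∀ i, 0 < n i) (w : ℕ) :
    ∀ i : ℕ, (∀ j < i, (w % Pp n (j + 1)) / Pp n j = n j - 1) ↔ w % Pp n i = Pp n i - 1 := by
  intro i
  induction i with
  | zero => simp [Pp_zero, Nat.mod_one]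
  | succ i ih =>
    have hPi := Pp_pos hn i
    have hni := hn i
    have hPi1 : Pp n (i + 1) = Pp n i * n i := Pp_succ n i
    have hmm : w % Pp n i = (w % Pp n (i + 1)) % Pp n i := by
      rw [Nat.mod_mod_of_dvd _ (Pp_dvd n (Nat.le_succ i))]
    set u := w % Pp n (i + 1) with hu
    have hrep : Pp n (i + 1) - 1 = (n i - 1) * Pp n i + (Pp n i - 1) := by
      rw [hPi1, maxrep _ _ hPi hni]
    constructor
    · intro H
      have h1 : u % Pp n i = Pp n i - 1 := by
        rw [← hmm]; exact (ih).1 fun j hj => H j (Nat.lt_succ_of_lt hj)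
      have h2 : u / Pp n i = n i - 1 := H i (Nat.lt_succ_self i)
      have hdm := Nat.div_add_mod u (Pp n i)
      rw [h1, h2] at hdm
      have e : (n i - 1) * Pp n i = n i * Pp n i - 1 * Pp n i := Nat.sub_mul _ 1 _
      have e2 : Pp n i * (n i - 1) = (n i - 1) * Pp n i := mul_comm _ _
      have e3 : Pp n i * n i = n i * Pp n i := mul_comm _ _
      have e4 : Pp n i ≤ n i * Pp n i := Nat.le_mul_of_pos_left _ hni
      omega
    · intro H
      have h2 : u / Pp n i = n i - 1 := by
        rw [H, hrep, mul_comm, Nat.mul_add_div hPi, Nat.div_eq_of_lt (by omega)]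
        omega
      have h1 : u % Pp n i = Pp n i - 1 := by
        rw [H, hrep, mul_comm, Nat.mul_add_mod, Nat.mod_eq_of_lt (by omega)]
      intro j hj
      rcases Nat.lt_succ_iff_lt_or_eq.1 hj with hj' | rfl
      · exact (ih.2 (by rw [hmm]; exact h1)) j hj'
      · exact h2

lemma cast_eq_neg_one_iff {m : ℕ} (hm : 0 < m) {a : ℕ} (ha : a < m) :
    ((a : ZMod m) = -1) ↔ a = m - 1 := by
  have h1 : (-1 : ZMod m) = ((m - 1 : ℕ) : ZMod m) := by
    have h2 : ((m - 1 : ℕ) : ZMod m) + ((1 : ℕ) : ZMod m) = 0 := by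
      rw [← Nat.cast_add, Nat.sub_add_cancel hm, ZMod.natCast_self]
    rw [Nat.cast_one] at h2
    have := eq_neg_of_add_eq_zero_left h2
    rw [this]
  rw [h1]
  constructor
  · intro hc
    have := congrArg ZMod.val hc
    rw [ZMod.val_natCast, ZMod.val_natCast, Nat.mod_eq_of_lt ha,
      Nat.mod_eq_of_lt (by omega)] at this
    exact this
  · rintro rfl; rfl

lemma sum_digits_lt {n : ℕ → ℕ} (hn : ∀ i, 0 < n i) (d : ℕ → ℕ) (hd : ∀ t, d t < n t) :
    ∀ m, (∑ t ∈ range m, d t * Pp n t) < Pp n m := by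
  intro m
  induction m with
  | zero => simp [Pp_zero]
  | succ m ih =>
    rw [Finset.sum_range_succ, Pp_succ]
    have e1 : d m * Pp n m + Pp n m = (d m + 1) * Pp n m := by ring
    have e2 : (d m + 1) * Pp n m ≤ n m * Pp n m := Nat.mul_le_mul_right _ (hd m)
    have e3 : Pp n m * n m = n m * Pp n m := mul_comm _ _
    omega

lemma digit_sum {n : ℕ → ℕ} (hn : ∀ i, 0 < n i) (d : ℕ → ℕ) (hd : ∀ t, d t < n t)
    {j k : ℕ} (hj : j < k) :
    ((∑ t ∈ range k, d t * Pp n t) % Pp n (j + 1)) / Pp n j = d j := by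
  have hsplit : ∑ t ∈ range k, d t * Pp n t
      = (∑ t ∈ range (j + 1), d t * Pp n t) + ∑ t ∈ Finset.Ico (j + 1) k, d t * Pp n t := by
    rw [Finset.range_eq_Ico, ← Finset.sum_Ico_consecutive _ (Nat.zero_le (j + 1)) hj, Finset.range_eq_Ico]
  have hdvd : Pp n (j + 1) ∣ ∑ t ∈ Finset.Ico (j + 1) k, d t * Pp n t :=
    Finset.dvd_sum fun t ht => ((Pp_dvd n (Finset.mem_Ico.1 ht).1).mul_left (d t))
  obtain ⟨c, hc⟩ := hdvd
  have hlt : (∑ t ∈ range (j + 1), d t * Pp n t) < Pp n (j + 1) := sum_digits_lt hn d hd _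
  rw [hsplit, hc, mul_comm, Nat.add_mul_mod_self_right, Nat.mod_eq_of_lt hlt,
    Finset.sum_range_succ, Nat.add_mul_div_right _ _ (Pp_pos hn j),
    Nat.div_eq_of_lt (sum_digits_lt hn d hd j)]
  omega

/-- Correction of the maps `f k` into a compatible family. -/
noncomputable def gg {X : Type*} (n : ℕ → ℕ) (f : ∀ k, X → ZMod (Pp n (k + 1))) :
    ∀ k, X → ZMod (Pp n (k + 1))
  | 0 => f 0
  | (k + 1) => fun x =>
      f (k + 1) x +
        (((gg n f k x -
            ZMod.castHom (Pp_dvd n (Nat.le_succ (k + 1))) (ZMod (Pp n (k + 1)))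
              (f (k + 1) x)).val : ℕ) : ZMod (Pp n (k + 2)))

section GG

variable {X : Type*} {n : ℕ → ℕ}

lemma gg_compat (hn : ∀ i, 0 < n i) (f : ∀ k, X → ZMod (Pp n (k + 1))) (k : ℕ) (x : X) :
    ZMod.castHom (Pp_dvd n (Nat.le_succ (k + 1))) (ZMod (Pp n (k + 1)))
      (gg n f (k + 1) x) = gg n f k x := by
  haveI : NeZero (Pp n (k + 1)) := ⟨(Pp_pos hn (k + 1)).ne'⟩
  show ZMod.castHom _ _ (f (k + 1) x + _) = _
  rw [map_add, map_natCast, ZMod.natCast_val, ZMod.cast_id]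
  ring

lemma gg_val_mod (hn : ∀ i, 0 < n i) (f : ∀ k, X → ZMod (Pp n (k + 1))) (k : ℕ) (x : X) :
    (gg n f k x).val = (gg n f (k + 1) x).val % Pp n (k + 1) := by
  haveI : NeZero (Pp n (k + 1)) := ⟨(Pp_pos hn (k + 1)).ne'⟩
  haveI : NeZero (Pp n (k + 2)) := ⟨(Pp_pos hn (k + 2)).ne'⟩
  conv_lhs => rw [← gg_compat hn f k x]
  rw [ZMod.castHom_apply, ← ZMod.natCast_val, ZMod.val_natCast]

lemma gg_val_mod_le (hn : ∀ i, 0 < n i) (f : ∀ k, X → ZMod (Pp n (k + 1)))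
    {j k : ℕ} (hjk : j ≤ k) (x : X) :
    (gg n f j x).val = (gg n f k x).val % Pp n (j + 1) := by
  haveI : NeZero (Pp n (j + 1)) := ⟨(Pp_pos hn (j + 1)).ne'⟩
  induction k, hjk using Nat.le_induction with
  | base => exact (Nat.mod_eq_of_lt (ZMod.val_lt _)).symm
  | succ k hk ih =>
    rw [ih, gg_val_mod hn f k x, Nat.mod_mod_of_dvd _ (Pp_dvd n (by omega))]

lemma gg_T {T : X → X} (f : ∀ k, X → ZMod (Pp n (k + 1)))
    (hf : ∀ k x, f k (T x) = f k x + 1) :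
    ∀ k (x : X), gg n f k (T x) = gg n f k x + 1 := by
  intro k
  induction k with
  | zero => exact hf 0
  | succ k ih =>
    intro x
    show f (k + 1) (T x) + _ = f (k + 1) x + _ + 1
    rw [hf (k + 1) x, ih x]
    have h3 : gg n f k x + 1 -
        ZMod.castHom (Pp_dvd n (Nat.le_succ (k + 1))) (ZMod (Pp n (k + 1)))
          (f (k + 1) x + 1)
        = gg n f k x -
        ZMod.castHom (Pp_dvd n (Nat.le_succ (k + 1))) (ZMod (Pp n (k + 1)))
          (f (k + 1) x) := by
      rw [map_add, map_one]; ring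
    rw [h3]
    ring

lemma gg_iterate {T : X → X} (f : ∀ k, X → ZMod (Pp n (k + 1)))
    (hf : ∀ k x, f k (T x) = f k x + 1) (k m : ℕ) (x : X) :
    gg n f k (T^[m] x) = gg n f k x + (m : ZMod (Pp n (k + 1))) := by
  induction m with
  | zero => simp
  | succ m ih =>
    rw [Function.iterate_succ_apply', gg_T f hf, ih]
    push_cast
    ring

lemma gg_surj (hn : ∀ i, 0 < n i) {T : X → X} (f : ∀ k, X → ZMod (Pp n (k + 1)))
    (hf : ∀ k x, f k (T x) = f k x + 1) (x₀ : X) (k : ℕ) :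
    Function.Surjective (gg n f k) := by
  haveI : NeZero (Pp n (k + 1)) := ⟨(Pp_pos hn (k + 1)).ne'⟩
  intro c
  refine ⟨T^[(c - gg n f k x₀).val] x₀, ?_⟩
  rw [gg_iterate f hf, ZMod.natCast_val, ZMod.cast_id]
  ring

lemma gg_cont [TopologicalSpace X] (f : ∀ k, X → ZMod (Pp n (k + 1)))
    (hc : ∀ k, Continuous (f k)) : ∀ k, Continuous (gg n f k) := by
  intro k
  induction k with
  | zero => exact hc 0
  | succ k ih =>
    have h2 : Continuous (fun p : ZMod (Pp n (k + 2)) × ZMod (Pp n (k + 1)) =>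
        p.1 + (((p.2 - ZMod.castHom (Pp_dvd n (Nat.le_succ (k + 1)))
          (ZMod (Pp n (k + 1))) p.1).val : ℕ) : ZMod (Pp n (k + 2)))) :=
      continuous_of_discreteTopology
    exact h2.comp ((hc (k + 1)).prodMk ih)

end GG

/-- The odometer ("adding machine") on `∏_{i} ℤ/n_iℤ`: add 1 at coordinate `i`
exactly when all earlier coordinates equal `-1` (and the carry propagates). -/
def odometer (n : ℕ → ℕ) : ((i : ℕ) → ZMod (n i)) → ((i : ℕ) → ZMod (n i)) :=
  fun x i => if ∀ j, j < i → x j = -1 then x i + 1 else x i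

/-- If a continuous map `T` of a compact space is a continuous extension of cyclic
permutations of orders `n₁, n₁n₂, n₁n₂n₃, …`, then it is a continuous extension of
the odometer on `∏ ℤ/n_iℤ`. -/
theorem stmt15 {X : Type*} [TopologicalSpace X] [CompactSpace X]
    (T : X → X) (hT : Continuous T) (n : ℕ → ℕ) (hn : ∀ i, 0 < n i)
    (h : ∀ k : ℕ, ∃ f : X → ZMod (∏ i ∈ Finset.range (k + 1), n i),
      Continuous f ∧ Function.Surjective f ∧ ∀ x, f (T x) = f x + 1) :
    ∃ F : X → ((i : ℕ) → ZMod (n i)),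
      Continuous F ∧ Function.Surjective F ∧ ∀ x, F (T x) = odometer n (F x) := by
  choose f hfc hfs hfT using h
  have f' : ∀ k, X → ZMod (Pp n (k + 1)) := f
  obtain ⟨x₀, -⟩ := hfs 0 0
  set F : X → ((i : ℕ) → ZMod (n i)) :=
    fun x i => (((gg n f i x).val / Pp n i : ℕ) : ZMod (n i)) with hF
  have hgc : ∀ k, Continuous (gg n f k) := gg_cont f hfc
  have hFc : Continuous F := by
    apply continuous_pi
    intro i
    exact (continuous_of_discreteTopology
      (f := fun a : ZMod (Pp n (i + 1)) => ((a.val / Pp n i : ℕ) : ZMod (n i)))).comp (hgc i)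
  have hvlt : ∀ k (x : X), (gg n f k x).val < Pp n (k + 1) := by
    intro k x
    haveI : NeZero (Pp n (k + 1)) := ⟨(Pp_pos hn (k + 1)).ne'⟩
    exact ZMod.val_lt _
  -- the condition characterization
  have hcond : ∀ (x : X) (i : ℕ),
      (∀ j, j < i → F x j = -1) ↔ (gg n f i x).val % Pp n i = Pp n i - 1 := by
    intro x i
    rw [← all_max_iff hn ((gg n f i x).val) i]
    apply forall_congr'
    intro j
    apply imp_congr_right
    intro hj
    have hvj : (gg n f j x).val = (gg n f i x).val % Pp n (j + 1) :=
      gg_val_mod_le hn f (Nat.le_of_lt hj) x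
    have hdlt : (gg n f j x).val / Pp n j < n j := by
      rw [Nat.div_lt_iff_lt_mul (Pp_pos hn j), mul_comm, ← Pp_succ]
      exact hvlt j x
    have : F x j = (((gg n f j x).val / Pp n j : ℕ) : ZMod (n j)) := rfl
    rw [this, cast_eq_neg_one_iff (hn j) hdlt, hvj]
  refine ⟨F, hFc, ?_, ?_⟩
  · -- surjectivity
    intro y
    have hd : ∀ t, (y t).val < n t := by
      intro t
      haveI : NeZero (n t) := ⟨(hn t).ne'⟩
      exact ZMod.val_lt _
    have hxs : ∀ k : ℕ, ∃ x, ∀ j, j ≤ k → F x j = y j := by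
      intro k
      haveI : NeZero (Pp n (k + 1)) := ⟨(Pp_pos hn (k + 1)).ne'⟩
      obtain ⟨x, hx⟩ := gg_surj hn f hfT x₀ k
        ((∑ t ∈ Finset.range (k + 1), (y t).val * Pp n t : ℕ) : ZMod (Pp n (k + 1)))
      refine ⟨x, fun j hj => ?_⟩
      have hvk : (gg n f k x).val = ∑ t ∈ Finset.range (k + 1), (y t).val * Pp n t := by
        rw [hx, ZMod.val_natCast,
          Nat.mod_eq_of_lt (sum_digits_lt hn _ hd (k + 1))]
      have hvj : (gg n f j x).val
          = (∑ t ∈ Finset.range (k + 1), (y t).val * Pp n t) % Pp n (j + 1) := by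
        rw [← hvk]; exact gg_val_mod_le hn f hj x
      show (((gg n f j x).val / Pp n j : ℕ) : ZMod (n j)) = y j
      rw [hvj, digit_sum hn _ hd (Nat.lt_succ_of_le hj)]
      haveI : NeZero (n j) := ⟨(hn j).ne'⟩
      rw [ZMod.natCast_val, ZMod.cast_id]
    choose xs hxs using hxs
    have htend : Filter.Tendsto (fun k => F (xs k)) Filter.atTop (nhds y) := by
      rw [tendsto_pi_nhds]
      intro j
      exact tendsto_atTop_of_eventually_const (i₀ := j) fun k hk => hxs k j hk
    have hclosed : IsClosed (Set.range F) := (isCompact_range hFc).isClosed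
    exact hclosed.mem_of_tendsto htend (Filter.Eventually.of_forall fun k => Set.mem_range_self _)
  · -- equivariance
    intro x
    funext i
    have hPi := Pp_pos hn i
    haveI : NeZero (Pp n (i + 1)) := ⟨(Pp_pos hn (i + 1)).ne'⟩
    set w := (gg n f i x).val with hw
    clear_value w
    have hwT : (gg n f i (T x)).val = (w + 1) % Pp n (i + 1) := by
      have hc1 : ((w + 1 : ℕ) : ZMod (Pp n (i + 1))) = gg n f i x + 1 := by
        push_cast
        rw [hw, ZMod.natCast_val, ZMod.cast_id]
      rw [gg_T f hfT i x, ← hc1, ZMod.val_natCast]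
    have hFT : F (T x) i = (((w + 1) / Pp n i : ℕ) : ZMod (n i)) := by
      show (((gg n f i (T x)).val / Pp n i : ℕ) : ZMod (n i)) = _
      rw [hwT, Pp_succ, dmod _ _ hPi]
    have hodo : odometer n (F x) i
        = if ∀ j, j < i → F x j = -1 then F x i + 1 else F x i := rfl
    by_cases hC : ∀ j, j < i → F x j = -1
    · rw [hodo, if_pos hC, hFT]
      have hmod : w % Pp n i = Pp n i - 1 := by rw [hw]; exact (hcond x i).1 hC
      have hdm := Nat.div_add_mod w (Pp n i)
      have e : (w / Pp n i + 1) * Pp n i = Pp n i * (w / Pp n i) + Pp n i := by ring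
      have hdiv : (w + 1) / Pp n i = w / Pp n i + 1 := by
        rw [show w + 1 = (w / Pp n i + 1) * Pp n i from by omega,
          Nat.mul_div_cancel _ hPi]
      rw [hdiv]
      push_cast
      rw [hw]
    · rw [hodo, if_neg hC, hFT]
      have hmod : w % Pp n i ≠ Pp n i - 1 := fun hc => hC ((hcond x i).2 (by rw [← hw]; exact hc))
      have hmlt : w % Pp n i < Pp n i := Nat.mod_lt _ hPi
      have hdm := Nat.div_add_mod w (Pp n i)
      have hdiv : (w + 1) / Pp n i = w / Pp n i := by
        rw [show w + 1 = Pp n i * (w / Pp n i) + (w % Pp n i + 1) from by omega,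
          Nat.mul_add_div hPi,
          Nat.div_eq_of_lt (show w % Pp n i + 1 < Pp n i by omega), Nat.add_zero]
      rw [hdiv, hw]
end

section
/- Let X be a compact topological space and T : X → X a continuous map. Then the set CF(T) satisfies: (i) 1 ∈ CF(T); (ii) if n ∈ CF(T) and d is a positive divisor of n, then d ∈ CF(T); (iii) if n₁, n₂, …, n_k ∈ CF(T), then lcm(n₁, n₂, …, n_k) ∈ CF(T). -/
private lemma CF.pair {X : Type*} [TopologicalSpace X] [Nonempty X] (T : X → X)
    {m n : ℕ} (hm : m ∈ CF T) (hn : n ∈ CF T) : Nat.lcm m n ∈ CF T := by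
  obtain ⟨hm0, f₁, hf₁c, hf₁s, hf₁⟩ := hm
  obtain ⟨hn0, f₂, hf₂c, hf₂s, hf₂⟩ := hn
  haveI : NeZero m := ⟨hm0.ne'⟩
  haveI : NeZero n := ⟨hn0.ne'⟩
  set l := Nat.lcm m n with hl
  have hl0 : 0 < l := Nat.lcm_pos hm0 hn0
  haveI : NeZero l := ⟨hl0.ne'⟩
  refine ⟨hl0, ?_⟩
  set a : ZMod m × ZMod n := (1, 1) with ha
  have haord : addOrderOf a = l := by
    rw [ha, Prod.addOrderOf]; simp [ZMod.addOrderOf_one, hl]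
  set g : X → ZMod m × ZMod n := fun x => (f₁ x, f₂ x) with hg
  have hgT : ∀ x, g (T x) = g x + a := by
    intro x; simp [hg, ha, Prod.ext_iff, hf₁, hf₂]
  set φ : ZMod l → ZMod m × ZMod n := fun k => k.val • a with hφ
  have hzsmul : ∀ z : ℤ, z • a = φ (z : ZMod l) := by
    intro z
    have h1 : ((l : ℤ)) • a = 0 := by
      rw [natCast_zsmul, ← haord, addOrderOf_nsmul_eq_zero]
    have h3 : (((z : ZMod l).val : ℤ)) = z % l := ZMod.val_intCast z
    calc z • a = (z % l + l * (z / l)) • a := by rw [Int.emod_add_mul_ediv]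
      _ = (z % l) • a + (z / l) • ((l : ℤ) • a) := by
          rw [add_zsmul, mul_comm, mul_zsmul]
      _ = (z % l) • a := by rw [h1, smul_zero, add_zero]
      _ = (((z : ZMod l).val : ℤ)) • a := by rw [h3]
      _ = φ (z : ZMod l) := by rw [natCast_zsmul]
  have hcast : ∀ k : ZMod l, ((k.val : ℤ) : ZMod l) = k := by
    intro k; push_cast; exact ZMod.natCast_rightInverse k
  have hφadd : ∀ k, φ (k + 1) = φ k + a := by
    intro k
    have e1 : φ (k + 1) = ((k.val : ℤ) + 1) • a := by
      rw [hzsmul]; push_cast [hcast]; ring_nf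
    rw [e1, add_zsmul, one_zsmul, hzsmul, hcast]
  have hφinj : Function.Injective φ := by
    intro k₁ k₂ hkk
    have h1 : k₁.val ∈ Set.Iio (addOrderOf a) := by rw [haord]; exact ZMod.val_lt k₁
    have h2 : k₂.val ∈ Set.Iio (addOrderOf a) := by rw [haord]; exact ZMod.val_lt k₂
    exact ZMod.val_injective _ (nsmul_injOn_Iio_addOrderOf h1 h2 hkk)
  have hφmem : ∀ k, φ k ∈ AddSubgroup.zmultiples a := by
    intro k
    exact AddSubgroup.mem_zmultiples_iff.2 ⟨(k.val : ℤ), by rw [natCast_zsmul]⟩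
  set H := AddSubgroup.zmultiples a with hH
  set π : ZMod m × ZMod n → (ZMod m × ZMod n) ⧸ H := QuotientAddGroup.mk with hπdef
  have hπ : ∀ y, y - (π y).out ∈ H := by
    intro y
    rw [← QuotientAddGroup.eq_iff_sub_mem]
    exact (QuotientAddGroup.out_eq' (π y)).symm
  set ψ : ZMod m × ZMod n → ZMod l := fun y => Function.invFun φ (y - (π y).out) with hψdef
  have factA : ∀ y, φ (ψ y) = y - (π y).out := by
    intro y
    obtain ⟨z, hz⟩ := AddSubgroup.mem_zmultiples_iff.1 (hπ y)
    have : y - (π y).out = φ (z : ZMod l) := by rw [← hz, hzsmul]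
    show φ (Function.invFun φ (y - Quotient.out (π y))) = y - Quotient.out (π y)
    rw [this]
    exact Function.invFun_eq ⟨_, rfl⟩
  have hψadd : ∀ y, ψ (y + a) = ψ y + 1 := by
    intro y
    apply hφinj
    have hπa : π (y + a) = π y := by
      rw [hπdef]
      rw [QuotientAddGroup.eq_iff_sub_mem]
      have e : y + a - y = a := by abel
      rw [e, hH]
      exact AddSubgroup.mem_zmultiples a
    rw [factA, hφadd, factA, hπa]
    abel
  -- the image of g is invariant under adding elements of H
  set Y : Set (ZMod m × ZMod n) := Set.range g with hY
  have haY : (fun y => y + a) '' Y = Y := by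
    apply Set.eq_of_subset_of_ncard_le ?_ ?_ (Set.toFinite _)
    · rintro _ ⟨_, ⟨x, rfl⟩, rfl⟩
      exact ⟨T x, by simpa using hgT x⟩
    · rw [Set.ncard_image_of_injective _ (add_left_injective a)]
  set S : AddSubgroup (ZMod m × ZMod n) :=
    { carrier := {h | (fun y => y + h) '' Y = Y}
      zero_mem' := by simp
      add_mem' := by
        intro h₁ h₂ e₁ e₂
        have : (fun y => y + (h₁ + h₂)) = (fun y => y + h₂) ∘ (fun y => y + h₁) := by
          funext y; simp [add_assoc]
        simp only [Set.mem_setOf_eq] at *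
        rw [this, Set.image_comp, e₁, e₂]
      neg_mem' := by
        intro h e
        simp only [Set.mem_setOf_eq] at *
        conv_lhs => rw [← e]
        rw [← Set.image_comp]
        simp } with hS
  have hHS : H ≤ S := AddSubgroup.zmultiples_le_of_mem haY
  have key : ∀ h ∈ H, ∀ y ∈ Y, y + h ∈ Y := by
    intro h hh y hy
    have e : (fun y => y + h) '' Y = Y := hHS hh
    rw [← e]
    exact ⟨y, hy, rfl⟩
  refine ⟨ψ ∘ g, ?_, ?_, ?_⟩
  · exact (continuous_of_discreteTopology).comp (hf₁c.prodMk hf₂c)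
  · intro k
    obtain ⟨x₀⟩ := ‹Nonempty X›
    set y₀ := g x₀ with hy₀
    set y := (π y₀).out + φ k with hy
    have hmem : (-(y₀ - (π y₀).out)) + φ k ∈ H := add_mem (neg_mem (hπ y₀)) (hφmem k)
    have h1 : y ∈ Y := by
      have e : y = y₀ + ((-(y₀ - (π y₀).out)) + φ k) := by rw [hy]; abel
      rw [e]
      exact key _ hmem y₀ ⟨x₀, rfl⟩
    obtain ⟨x, hx⟩ := h1
    have h2 : π y = π y₀ := by
      rw [hπdef, QuotientAddGroup.eq_iff_sub_mem]
      have e : y - y₀ = (-(y₀ - (π y₀).out)) + φ k := by rw [hy]; abel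
      rw [e]; exact hmem
    have h3 : ψ y = k := by
      apply hφinj
      rw [factA, h2, hy]
      abel
    exact ⟨x, by rw [Function.comp_apply, hx, h3]⟩
  · intro x
    rw [Function.comp_apply, Function.comp_apply, hgT, hψadd]

/-- Properties of the set `CF(T)` of orders of cyclic continuous factors of a
continuous map `T` of a compact space: (i) `1 ∈ CF(T)`; (ii) `CF(T)` is closed
under taking positive divisors; (iii) `CF(T)` is closed under least common
multiples of finitely many of its elements. -/
theorem stmt17 {X : Type*} [TopologicalSpace X] [CompactSpace X] [Nonempty X]
    (T : X → X) (hT : Continuous T) :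
    1 ∈ CF T ∧
    (∀ n ∈ CF T, ∀ d : ℕ, 0 < d → d ∣ n → d ∈ CF T) ∧
    (∀ s : Finset ℕ, s.Nonempty → ↑s ⊆ CF T → s.lcm id ∈ CF T) := by
  refine ⟨⟨one_pos, fun _ => 0, continuous_const, fun y => ⟨Classical.arbitrary X,
      Subsingleton.elim _ _⟩, fun x => Subsingleton.elim _ _⟩, ?_, ?_⟩
  · rintro nn ⟨hn0, f, hfc, hfs, hf⟩ d hd0 hdvd
    haveI : NeZero nn := ⟨hn0.ne'⟩
    haveI : NeZero d := ⟨hd0.ne'⟩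
    refine ⟨hd0, (ZMod.castHom hdvd (ZMod d)) ∘ f, ?_, ?_, ?_⟩
    · exact (continuous_of_discreteTopology).comp hfc
    · intro c
      obtain ⟨k, hk⟩ := ZMod.natCast_zmod_surjective c
      obtain ⟨x, hx⟩ := hfs (k : ZMod nn)
      exact ⟨x, by rw [Function.comp_apply, hx, map_natCast, hk]⟩
    · intro x
      rw [Function.comp_apply, Function.comp_apply, hf, map_add, map_one]
  · intro s hs hsub
    induction hs using Finset.Nonempty.cons_induction with
    | singleton a =>
        have ha : a ∈ CF T := hsub (by simp)
        simpa [Finset.lcm_singleton] using ha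
    | cons a s ha hs ih =>
        have h1 : a ∈ CF T := hsub (by simp)
        have h2 : s.lcm id ∈ CF T := ih (fun x hx => hsub (by
          simp only [Finset.coe_cons, Set.mem_insert_iff]
          exact Or.inr hx))
        rw [Finset.cons_eq_insert, Finset.lcm_insert, lcm_eq_nat_lcm]
        exact CF.pair T h1 h2
end

section
/- Let X be a compact topological space and T : X → X a continuous map. (a) If n ∈ CF(T), then T admits a continuous eigenfunction with eigenvalue e^{2πi/n}: there is a continuous φ : X → ℂ, not identically zero, with φ(Tx) = e^{2πi/n}·φ(x) for all x ∈ X. (b) If T is transitive (some point has dense orbit) and T admits a continuous, not identically zero φ : X → ℂ with φ(Tx) = e^{2πi/n}·φ(x) for all x, then n ∈ CF(T). (c) If T is transitive, then any two continuous eigenfunctions of T with the same eigenvalue λ ∈ ℂ are scalar multiples of one another. -/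
private lemma stmt18_pow_mod {ζ : ℂ} {n : ℕ} (hz : ζ ^ n = 1) (a : ℕ) :
    ζ ^ (a % n) = ζ ^ a := by
  conv_rhs => rw [← Nat.div_add_mod a n]
  rw [pow_add, pow_mul, hz, one_pow, one_mul]

private lemma stmt18_iter {X : Type*} {T : X → X} {φ : X → ℂ} {lam : ℂ}
    (hφ : ∀ x, φ (T x) = lam * φ x) (x : X) (k : ℕ) :
    φ (T^[k] x) = lam ^ k * φ x := by
  induction k with
  | zero => simp
  | succ k ih => rw [Function.iterate_succ_apply', hφ, ih, pow_succ]; ring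

private lemma stmt18_zeta_pow {n : ℕ} (hn : 0 < n) :
    Complex.exp (2 * Real.pi * Complex.I / (n : ℂ)) ^ n = 1 := by
  rw [← Complex.exp_nat_mul]
  have hne : (n : ℂ) ≠ 0 := Nat.cast_ne_zero.mpr hn.ne'
  rw [show (n : ℂ) * (2 * Real.pi * Complex.I / (n : ℂ)) = 2 * Real.pi * Complex.I by
    field_simp]
  exact Complex.exp_two_pi_mul_I

/-- (a) If `n ∈ CF(T)` then `T` has a continuous eigenfunction with eigenvalue
`e^{2πi/n}`.  (b) For transitive `T` the converse holds.  (c) For transitive `T`,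
any two continuous eigenfunctions with the same eigenvalue are scalar multiples of
one another. -/
theorem stmt18 {X : Type*} [TopologicalSpace X] [CompactSpace X]
    (T : X → X) (hT : Continuous T) :
    (∀ n ∈ CF T, ∃ φ : X → ℂ, Continuous φ ∧ φ ≠ 0 ∧
      ∀ x, φ (T x) = Complex.exp (2 * Real.pi * Complex.I / (n : ℂ)) * φ x) ∧
    ((∃ x₀ : X, Dense {y | ∃ k : ℕ, T^[k] x₀ = y}) →
      (∀ n : ℕ, 0 < n →
        (∃ φ : X → ℂ, Continuous φ ∧ φ ≠ 0 ∧
          ∀ x, φ (T x) = Complex.exp (2 * Real.pi * Complex.I / (n : ℂ)) * φ x) →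
        n ∈ CF T) ∧
      (∀ (lam : ℂ) (φ ψ : X → ℂ),
        Continuous φ → φ ≠ 0 → (∀ x, φ (T x) = lam * φ x) →
        Continuous ψ → ψ ≠ 0 → (∀ x, ψ (T x) = lam * ψ x) →
        ∃ c : ℂ, ψ = fun x => c * φ x)) := by
  constructor
  · -- part (a)
    rintro n ⟨hn, f, hfc, hfs, hff⟩
    haveI : NeZero n := ⟨hn.ne'⟩
    set ζ : ℂ := Complex.exp (2 * Real.pi * Complex.I / (n : ℂ)) with hζ
    have hzn : ζ ^ n = 1 := stmt18_zeta_pow hn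
    refine ⟨fun x => ζ ^ (f x).val, ?_, ?_, ?_⟩
    · show Continuous ((fun k : ZMod n => ζ ^ k.val) ∘ f)
      exact continuous_of_discreteTopology.comp hfc
    · obtain ⟨x, -⟩ := hfs 0
      intro h
      have := congrFun h x
      simp only [Pi.zero_apply] at this
      exact pow_ne_zero _ (Complex.exp_ne_zero _) this
    · intro x
      show ζ ^ (f (T x)).val = ζ * ζ ^ (f x).val
      rw [hff, ZMod.val_add]
      rw [stmt18_pow_mod hzn, pow_add, ZMod.val_one_eq_one_mod,
        stmt18_pow_mod hzn, pow_one]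
      ring
  · -- parts (b), (c)
    rintro ⟨x₀, hdense⟩
    have ext_on : ∀ (h g : X → ℂ), Continuous h → Continuous g →
        (∀ k : ℕ, h (T^[k] x₀) = g (T^[k] x₀)) → h = g := by
      intro h g hh hg heq
      apply Continuous.ext_on hdense hh hg
      rintro y ⟨k, rfl⟩; exact heq k
    constructor
    · -- part (b)
      rintro n hn ⟨φ, hφc, hφ0, hφe⟩
      haveI : NeZero n := ⟨hn.ne'⟩
      set ζ : ℂ := Complex.exp (2 * Real.pi * Complex.I / (n : ℂ)) with hζ
      have hzn : ζ ^ n = 1 := stmt18_zeta_pow hn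
      have hprim : IsPrimitiveRoot ζ n := Complex.isPrimitiveRoot_exp n hn.ne'
      -- φ^n is constant
      have hpowconst : ∀ x, φ x ^ n = φ x₀ ^ n := by
        have := ext_on (fun x => φ x ^ n) (fun _ => φ x₀ ^ n)
          (by continuity) continuous_const
          (by
            intro k
            show φ (T^[k] x₀) ^ n = φ x₀ ^ n
            rw [stmt18_iter hφe, mul_pow, ← pow_mul, mul_comm k n, pow_mul, hzn,
              one_pow, one_mul])
        exact fun x => congrFun this x
      have hx₀ : φ x₀ ≠ 0 := by
        obtain ⟨y, hy⟩ := Function.ne_iff.mp hφ0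
        intro h0
        apply hy
        have := hpowconst y
        rw [h0, zero_pow hn.ne'] at this
        exact pow_eq_zero_iff hn.ne' |>.mp this
      -- each φ x is ζ^k * φ x₀
      have hroot : ∀ x, ∃ k : ℕ, k < n ∧ ζ ^ k * φ x₀ = φ x := by
        intro x
        have h1 : (φ x / φ x₀) ^ n = 1 := by
          rw [div_pow, hpowconst x, div_self (pow_ne_zero _ hx₀)]
        obtain ⟨i, hi, hieq⟩ := hprim.eq_pow_of_pow_eq_one h1
        exact ⟨i, hi, by rw [hieq]; field_simp⟩
      classical
      set K : X → ℕ := fun x => (hroot x).choose with hK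
      have hKlt : ∀ x, K x < n := fun x => (hroot x).choose_spec.1
      have hKeq : ∀ x, ζ ^ K x * φ x₀ = φ x := fun x => (hroot x).choose_spec.2
      set f : X → ZMod n := fun x => (K x : ZMod n) with hf
      have hfval : ∀ x, (f x).val = K x := fun x => ZMod.val_cast_of_lt (hKlt x)
      -- characterization of f
      have hchar : ∀ (x : X) (m : ℕ), ζ ^ m * φ x₀ = φ x → f x = (m : ZMod n) := by
        intro x m hm
        have h1 : ζ ^ m = ζ ^ K x := by
          have := hm.trans (hKeq x).symm
          exact mul_right_cancel₀ hx₀ this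
        have h2 : ζ ^ (m % n) = ζ ^ K x := by rw [stmt18_pow_mod hzn, h1]
        have h3 : m % n = K x := hprim.pow_inj (Nat.mod_lt _ hn) (hKlt x) h2
        rw [hf]
        simp only
        rw [← h3, ZMod.natCast_mod]
      refine ⟨hn, f, ?_, ?_, ?_⟩
      · -- continuity
        rw [continuous_discrete_rng]
        intro k
        have hfiber : ∀ j : ZMod n, f ⁻¹' {j} = φ ⁻¹' {ζ ^ j.val * φ x₀} := by
          intro j
          ext x
          simp only [Set.mem_preimage, Set.mem_singleton_iff]
          constructor
          · rintro rfl
            rw [hfval x, hKeq x]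
          · intro h
            have := hchar x j.val h.symm
            rwa [ZMod.natCast_val, ZMod.cast_id] at this
        have hclosed : ∀ j : ZMod n, IsClosed (f ⁻¹' {j}) := by
          intro j
          rw [hfiber]
          exact IsClosed.preimage hφc isClosed_singleton
        have : f ⁻¹' {k} = (⋃ j : {j : ZMod n // j ≠ k}, f ⁻¹' {(j : ZMod n)})ᶜ := by
          ext x
          simp only [Set.mem_preimage, Set.mem_singleton_iff, Set.mem_compl_iff,
            Set.mem_iUnion, Subtype.exists]
          constructor
          · rintro rfl ⟨j, hj, hjx⟩; exact hj hjx.symm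
          · intro h
            by_contra hne
            exact h ⟨f x, fun hc => hne hc, rfl⟩
        rw [this]
        exact (isClosed_iUnion_of_finite fun j : {j : ZMod n // j ≠ k} => hclosed (j : ZMod n)).isOpen_compl
      · -- surjectivity
        intro k
        refine ⟨T^[k.val] x₀, ?_⟩
        have : ζ ^ k.val * φ x₀ = φ (T^[k.val] x₀) := (stmt18_iter hφe x₀ k.val).symm
        have := hchar _ _ this
        rwa [ZMod.natCast_val, ZMod.cast_id] at this
      · -- equivariance
        intro x
        have : ζ ^ (K x + 1) * φ x₀ = φ (T x) := by
          rw [hφe, ← hKeq x, pow_succ]; ring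
        have h1 := hchar _ _ this
        rw [h1, Nat.cast_add, Nat.cast_one]
    · -- part (c)
      intro lam φ ψ hφc hφ0 hφe hψc hψ0 hψe
      have hx₀ : φ x₀ ≠ 0 := by
        intro h0
        apply hφ0
        apply ext_on φ 0 hφc continuous_const
        intro k
        simp [stmt18_iter hφe, h0]
      refine ⟨ψ x₀ / φ x₀, ?_⟩
      apply ext_on ψ (fun x => ψ x₀ / φ x₀ * φ x) hψc (by continuity)
      intro k
      show ψ (T^[k] x₀) = ψ x₀ / φ x₀ * φ (T^[k] x₀)
      rw [stmt18_iter hψe, stmt18_iter hφe]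
      field_simp
end

section
/- Let (n_i)_{i≥1} and (m_i)_{i≥1} be sequences of positive integers, and let T₁ and T₂ be the odometers on X₁ = ∏_{i≥1} ℤ/n_iℤ and X₂ = ∏_{i≥1} ℤ/m_iℤ respectively. Then: (i) T₁ is a continuous factor of T₂ (i.e. there exists a continuous surjection h : X₂ → X₁ with h∘T₂ = T₁∘h) if and only if CF(T₁) ⊆ CF(T₂); (ii) T₁ and T₂ are continuously conjugated (i.e. there exists a homeomorphism h : X₂ → X₁ with h∘T₂ = T₁∘h) if and only if CF(T₁) = CF(T₂). -/
namespace Stmt19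


variable {n m : ℕ → ℕ} {N N' M : ℕ}


def PP (n : ℕ → ℕ) (N : ℕ) : ℕ := ∏ i ∈ Finset.range N, n i

def VV (n : ℕ → ℕ) (N : ℕ) (x : ∀ i, ZMod (n i)) : ℕ :=
  ∑ i ∈ Finset.range N, (x i).val * PP n i

lemma PP_pos (hn : ∀ i, 0 < n i) (N : ℕ) : 0 < PP n N :=
  Finset.prod_pos fun i _ => hn i

lemma PP_succ (N : ℕ) : PP n (N + 1) = PP n N * n N := Finset.prod_range_succ _ _

lemma PP_dvd (h : N ≤ N') : PP n N ∣ PP n N' :=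
  Finset.prod_dvd_prod_of_subset _ _ _ (Finset.range_subset_range.mpr h)

lemma VV_zero_pt (hm : ∀ i, 0 < m i) (M : ℕ) :
    VV m M (fun i => (0 : ZMod (m i))) = 0 := by
  haveI : ∀ i, NeZero (m i) := fun i => ⟨(hm i).ne'⟩
  simp [VV]

lemma VV_succ (x : ∀ i, ZMod (n i)) :
    VV n (N + 1) x = VV n N x + (x N).val * PP n N := Finset.sum_range_succ _ _

lemma VV_agree {x y : ∀ i, ZMod (n i)} (h : ∀ j < N, x j = y j) :
    VV n N x = VV n N y :=
  Finset.sum_congr rfl fun i hi => by rw [h i (Finset.mem_range.mp hi)]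

lemma VV_lt (hn : ∀ i, 0 < n i) (N : ℕ) (x : ∀ i, ZMod (n i)) :
    VV n N x < PP n N := by
  haveI : ∀ i, NeZero (n i) := fun i => ⟨(hn i).ne'⟩
  induction N with
  | zero => simp [VV, PP]
  | succ N ih =>
    have hval : (x N).val < n N := ZMod.val_lt _
    have hP := PP_pos hn N
    rw [VV_succ, PP_succ]
    calc VV n N x + (x N).val * PP n N
        < PP n N + (x N).val * PP n N := by omega
      _ = ((x N).val + 1) * PP n N := by ring
      _ ≤ n N * PP n N := Nat.mul_le_mul_right _ (by omega)
      _ = PP n N * n N := Nat.mul_comm _ _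

lemma VV_trunc (hn : ∀ i, 0 < n i) (h : N ≤ N') (x : ∀ i, ZMod (n i)) :
    VV n N' x % PP n N = VV n N x := by
  obtain ⟨k, rfl⟩ := Nat.le.dest h
  induction k with
  | zero => exact Nat.mod_eq_of_lt (VV_lt hn N x)
  | succ k ih =>
    have : N + (k+1) = (N + k) + 1 := rfl
    rw [this, VV_succ]
    obtain ⟨t, ht⟩ := PP_dvd (n := n) (Nat.le_add_right N k)
    rw [ht]
    have : VV n (N + k) x + (x (N + k)).val * (PP n N * t)
        = VV n (N + k) x + ((x (N + k)).val * t) * PP n N := by ring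
    rw [this, Nat.add_mul_mod_self_right]
    exact ih (Nat.le_add_right N k)

lemma VV_inj (hn : ∀ i, 0 < n i) {x y : ∀ i, ZMod (n i)}
    (h : VV n N x = VV n N y) : ∀ i < N, x i = y i := by
  haveI : ∀ i, NeZero (n i) := fun i => ⟨(hn i).ne'⟩
  induction N with
  | zero => omega
  | succ N ih =>
    have hN : VV n N x = VV n N y := by
      rw [← VV_trunc hn (Nat.le_succ N) x, h, VV_trunc hn (Nat.le_succ N) y]
    intro i hi
    rcases Nat.lt_succ_iff_lt_or_eq.mp hi with hi' | rfl
    · exact ih hN i hi'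
    · have h1 : VV n i x + (x i).val * PP n i = VV n i y + (y i).val * PP n i := by
        rw [← VV_succ, ← VV_succ]; exact h
      have h2 : (x i).val = (y i).val := by
        have hP := PP_pos hn i
        have := hN
        have h3 : (x i).val * PP n i = (y i).val * PP n i := by omega
        exact Nat.eq_of_mul_eq_mul_right hP h3
      exact ZMod.val_injective _ h2

lemma odometer_apply_pos {x : ∀ i, ZMod (n i)} {i : ℕ} (h : ∀ j < i, x j = -1) :
    odometer n x i = x i + 1 := by simp only [odometer]; exact if_pos h

lemma odometer_apply_neg {x : ∀ i, ZMod (n i)} {i : ℕ} (h : ¬∀ j < i, x j = -1) :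
    odometer n x i = x i := by simp only [odometer]; exact if_neg h

lemma val_neg_one' {c : ℕ} (hc : 0 < c) : (-1 : ZMod c).val = c - 1 := by
  obtain ⟨k, rfl⟩ := Nat.exists_eq_succ_of_ne_zero hc.ne'
  simpa using ZMod.val_neg_one k

lemma val_add_one {c : ℕ} (hc : 0 < c) {a : ZMod c} (ha : a ≠ -1) :
    (a + 1).val = a.val + 1 := by
  haveI : NeZero c := ⟨hc.ne'⟩
  rcases Nat.lt_or_ge c 2 with hc2 | hc2
  · interval_cases c
    · exact absurd (Subsingleton.elim a (-1)) ha
  · have hval : a.val < c := ZMod.val_lt a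
    have hne : a.val ≠ c - 1 := by
      intro hv
      apply ha
      have : ((c - 1 : ℕ) : ZMod c) = -1 := by
        have h1 : (1 : ℕ) ≤ c := hc
        push_cast [Nat.cast_sub h1]
        simp
      rw [← this, ← hv, ZMod.natCast_val, ZMod.cast_id]
    have h1 : (1 : ZMod c).val = 1 := ZMod.val_one_eq_one_mod c ▸ Nat.mod_eq_of_lt hc2
    have := ZMod.val_add_of_lt (a := a) (b := 1) (by omega)
    omega

lemma VV_maxed (hn : ∀ i, 0 < n i) {x : ∀ i, ZMod (n i)} (h : ∀ j < N, x j = -1) :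
    VV n N x = PP n N - 1 := by
  induction N with
  | zero => simp [VV, PP]
  | succ N ih =>
    have hP := PP_pos hn N
    have hx : (x N).val = n N - 1 := by
      rw [h N (Nat.lt_succ_self N)]; exact val_neg_one' (hn N)
    rw [VV_succ, ih (fun j hj => h j (hj.trans (Nat.lt_succ_self N))), hx, PP_succ]
    have hc := hn N
    have hq : PP n N ≤ PP n N * n N := Nat.le_mul_of_pos_right _ hc
    have hmul : (n N - 1) * PP n N = PP n N * n N - PP n N := by
      rw [Nat.sub_mul, one_mul, Nat.mul_comm]
    rw [hmul]
    omega

lemma VV_odometer (hn : ∀ i, 0 < n i) (N : ℕ) (x : ∀ i, ZMod (n i)) :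
    VV n N (odometer n x) =
      if ∀ j < N, x j = -1 then 0 else VV n N x + 1 := by
  induction N with
  | zero => simp [VV]
  | succ N ih =>
    rw [VV_succ, ih]
    by_cases hc : ∀ j < N, x j = -1
    · rw [if_pos hc]
      have hTN : odometer n x N = x N + 1 := odometer_apply_pos hc
      by_cases hN : x N = -1
      · have hall : ∀ j < N + 1, x j = -1 := by
          intro j hj
          rcases Nat.lt_succ_iff_lt_or_eq.mp hj with h | rfl
          · exact hc j h
          · exact hN
        rw [if_pos hall, hTN, hN]
        simp
      · have hnall : ¬∀ j < N + 1, x j = -1 := fun hall => hN (hall N (Nat.lt_succ_self N))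
        rw [if_neg hnall, hTN, val_add_one (hn N) hN, VV_succ, VV_maxed hn hc,
          Nat.add_mul, one_mul]
        have hP := PP_pos hn N
        omega
    · have hnall : ¬∀ j < N + 1, x j = -1 := fun hall => hc fun j hj => hall j (hj.trans (Nat.lt_succ_self N))
      rw [if_neg hnall, if_neg hc]
      have hTN : odometer n x N = x N := odometer_apply_neg hc
      rw [hTN, VV_succ]
      ring

lemma VV_odometer_mod (hn : ∀ i, 0 < n i) (N : ℕ) (x : ∀ i, ZMod (n i)) :
    VV n N (odometer n x) = (VV n N x + 1) % PP n N := by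
  rw [VV_odometer hn]
  by_cases hc : ∀ j < N, x j = -1
  · rw [if_pos hc, VV_maxed hn hc]
    have hP := PP_pos hn N
    have : PP n N - 1 + 1 = PP n N := by omega
    rw [this, Nat.mod_self]
  · rw [if_neg hc]
    have h1 : VV n N (odometer n x) = VV n N x + 1 := by rw [VV_odometer hn, if_neg hc]
    have h2 := VV_lt hn N (odometer n x)
    rw [h1] at h2
    exact (Nat.mod_eq_of_lt h2).symm

lemma VV_iter (hn : ∀ i, 0 < n i) (N k : ℕ) (x : ∀ i, ZMod (n i)) :
    VV n N ((odometer n)^[k] x) = (VV n N x + k) % PP n N := by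
  induction k with
  | zero => simp [Nat.mod_eq_of_lt (VV_lt hn N x)]
  | succ k ih =>
    rw [Function.iterate_succ_apply', VV_odometer_mod hn, ih, Nat.mod_add_mod,
      ← Nat.add_assoc]

lemma continuous_of_depends {Y : Type*} [TopologicalSpace Y]
    (f : (∀ i, ZMod (m i)) → Y) (M : ℕ)
    (hf : ∀ x y, (∀ j < M, x j = y j) → f x = f y) : Continuous f := by
  have hfactor : f = (fun a : (∀ j : Fin M, ZMod (m j.1)) =>
      f (fun j => if h : j < M then a ⟨j, h⟩ else 0)) ∘ (fun x (j : Fin M) => x j.1) := by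
    funext x
    exact (hf (fun j => if h : j < M then x j else 0) x fun j hj => by simp [hj]).symm
  rw [hfactor]
  exact continuous_of_discreteTopology.comp (continuous_pi fun j => continuous_apply j.1)

lemma exists_bound {Y : Type*} [TopologicalSpace Y] [DiscreteTopology Y]
    (hm : ∀ i, 0 < m i) (f : (∀ i, ZMod (m i)) → Y) (hf : Continuous f) :
    ∃ M, ∀ x y, (∀ j < M, x j = y j) → f x = f y := by
  haveI : ∀ i, NeZero (m i) := fun i => ⟨(hm i).ne'⟩
  have key : ∀ x : ∀ i, ZMod (m i), ∃ (I : Finset ℕ),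
      ∀ y : ∀ i, ZMod (m i), (∀ j ∈ I, y j = x j) → f y = f x := by
    intro x
    have hopen : IsOpen (f ⁻¹' {f x}) := (isOpen_discrete _).preimage hf
    obtain ⟨I, u, hIu, hsub⟩ := isOpen_pi_iff.mp hopen x rfl
    refine ⟨I, fun y hy => ?_⟩
    exact hsub (fun a ha => by rw [hy a ha]; exact (hIu a ha).2)
  choose I hI using key
  set C : (∀ i, ZMod (m i)) → Set (∀ i, ZMod (m i)) :=
    fun x => {y | ∀ j ∈ I x, y j = x j} with hC
  have hCopen : ∀ x, IsOpen (C x) := by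
    intro x
    have : C x = ⋂ j ∈ I x, (fun y : ∀ i, ZMod (m i) => y j) ⁻¹' {x j} := by
      ext y; simp [hC, Set.mem_iInter]
    rw [this]
    exact isOpen_biInter_finset fun j _ => (isOpen_discrete _).preimage (continuous_apply j)
  have hcover : Set.univ ⊆ ⋃ x, C x := fun x _ =>
    Set.mem_iUnion.mpr ⟨x, fun j _ => rfl⟩
  obtain ⟨t, ht⟩ := isCompact_univ.elim_finite_subcover C hCopen hcover
  refine ⟨(t.sup fun z => (I z).sup id) + 1, fun x y hxy => ?_⟩
  obtain ⟨z, hz, hxz⟩ : ∃ z ∈ t, x ∈ C z := by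
    have := ht (Set.mem_univ x)
    simpa using this
  have hjlt : ∀ j ∈ I z, j < (t.sup fun z => (I z).sup id) + 1 := by
    intro j hj
    have h1 : j ≤ (I z).sup id := Finset.le_sup (f := id) hj
    have h2 : (I z).sup id ≤ t.sup fun z => (I z).sup id :=
      Finset.le_sup (f := fun z => (I z).sup id) hz
    omega
  have hyz : y ∈ C z := fun j hj => by rw [← hxy j (hjlt j hj)]; exact hxz j hj
  rw [hI z x hxz, hI z y hyz]

lemma cast_mod_of_dvd {k b : ℕ} (h : k ∣ b) (a : ℕ) :
    ((a % b : ℕ) : ZMod k) = (a : ZMod k) := by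
  conv_rhs => rw [← Nat.div_add_mod a b]
  push_cast
  rw [(ZMod.natCast_eq_zero_iff b k).mpr h]
  ring

lemma f_iter {X : Type*} {k : ℕ} (T : X → X) (f : X → ZMod k)
    (hf : ∀ x, f (T x) = f x + 1) (j : ℕ) (x : X) :
    f (T^[j] x) = f x + (j : ZMod k) := by
  induction j with
  | zero => simp
  | succ j ih =>
    rw [Function.iterate_succ_apply', hf, ih]
    push_cast
    ring

lemma CF_odometer (hn : ∀ i, 0 < n i) :
    CF (odometer n) = {k | 0 < k ∧ ∃ N, k ∣ PP n N} := by
  ext k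
  constructor
  · rintro ⟨hk, f, cf, sf, ef⟩
    haveI : NeZero k := ⟨hk.ne'⟩
    refine ⟨hk, ?_⟩
    obtain ⟨M, hM⟩ := exists_bound hn f cf
    refine ⟨M, ?_⟩
    have hagree : ∀ x : ∀ i, ZMod (n i), ∀ j < M, (odometer n)^[PP n M] x j = x j := by
      intro x
      apply VV_inj hn
      rw [VV_iter hn, Nat.add_mod_right, Nat.mod_eq_of_lt (VV_lt hn M x)]
    have hfix : ∀ x, f ((odometer n)^[PP n M] x) = f x := fun x => hM _ _ (hagree x)
    have := f_iter (odometer n) f ef (PP n M) (fun i => 0)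
    rw [hfix] at this
    have hcast : ((PP n M : ℕ) : ZMod k) = 0 := left_eq_add.mp this
    exact (ZMod.natCast_eq_zero_iff _ _).mp hcast
  · rintro ⟨hk, N, hdvd⟩
    haveI : NeZero k := ⟨hk.ne'⟩
    refine ⟨hk, fun x => ((VV n N x : ℕ) : ZMod k), ?_, ?_, ?_⟩
    · exact continuous_of_depends _ N fun x y h => by rw [VV_agree h]
    · intro c
      refine ⟨(odometer n)^[c.val] (fun i => 0), ?_⟩
      show ((VV n N ((odometer n)^[c.val] fun i => 0) : ℕ) : ZMod k) = c
      rw [VV_iter hn, VV_zero_pt hn, Nat.zero_add, cast_mod_of_dvd hdvd,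
        ZMod.natCast_rightInverse c]
    · intro x
      show ((VV n N (odometer n x) : ℕ) : ZMod k) = ((VV n N x : ℕ) : ZMod k) + 1
      rw [VV_odometer_mod hn, cast_mod_of_dvd hdvd]
      push_cast
      ring

section Construct

variable (hsub : ∀ N, ∃ M, PP n N ∣ PP m M)

noncomputable def Mc (N : ℕ) : ℕ := (hsub N).choose

lemma Mc_spec (N : ℕ) : PP n N ∣ PP m (Mc hsub N) := (hsub N).choose_spec

noncomputable def uu (x : ∀ i, ZMod (m i)) (N : ℕ) : ℕ :=
  VV m (Mc hsub N) x % PP n N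

lemma uu_indep (hm : ∀ i, 0 < m i) {M N : ℕ} (hM : PP n N ∣ PP m M)
    (x : ∀ i, ZMod (m i)) : VV m M x % PP n N = uu hsub x N := by
  have e1 : VV m M x % PP n N = VV m (max M (Mc hsub N)) x % PP n N := by
    conv_lhs => rw [← VV_trunc hm (le_max_left M (Mc hsub N)) x]
    exact Nat.mod_mod_of_dvd _ hM
  have e2 : VV m (Mc hsub N) x % PP n N = VV m (max M (Mc hsub N)) x % PP n N := by
    conv_lhs => rw [← VV_trunc hm (le_max_right M (Mc hsub N)) x]
    exact Nat.mod_mod_of_dvd _ (Mc_spec hsub N)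
  rw [e1, ← e2]
  rfl

lemma uu_lt (hn : ∀ i, 0 < n i) (x : ∀ i, ZMod (m i)) (N : ℕ) :
    uu hsub x N < PP n N := Nat.mod_lt _ (PP_pos hn N)

lemma uu_trunc (hn : ∀ i, 0 < n i) (hm : ∀ i, 0 < m i) {N' N : ℕ} (h : N' ≤ N)
    (x : ∀ i, ZMod (m i)) : uu hsub x N % PP n N' = uu hsub x N' := by
  have h1 : PP n N' ∣ PP m (Mc hsub N) := (PP_dvd h).trans (Mc_spec hsub N)
  rw [uu, Nat.mod_mod_of_dvd _ (PP_dvd h)]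
  exact uu_indep hsub hm h1 x

lemma uu_odometer (hn : ∀ i, 0 < n i) (hm : ∀ i, 0 < m i)
    (x : ∀ i, ZMod (m i)) (N : ℕ) :
    uu hsub (odometer m x) N = (uu hsub x N + 1) % PP n N := by
  rw [uu, VV_odometer_mod hm, Nat.mod_mod_of_dvd _ (Mc_spec hsub N), uu,
    Nat.mod_add_mod]

lemma uu_iter (hn : ∀ i, 0 < n i) (hm : ∀ i, 0 < m i)
    (x : ∀ i, ZMod (m i)) (N k : ℕ) :
    uu hsub ((odometer m)^[k] x) N = (uu hsub x N + k) % PP n N := by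
  rw [uu, VV_iter hm, Nat.mod_mod_of_dvd _ (Mc_spec hsub N), uu, Nat.mod_add_mod]

noncomputable def hh : (∀ i, ZMod (m i)) → (∀ i, ZMod (n i)) :=
  fun x i => ((uu hsub x (i + 1) / PP n i : ℕ) : ZMod (n i))

lemma VV_hh (hn : ∀ i, 0 < n i) (hm : ∀ i, 0 < m i)
    (x : ∀ i, ZMod (m i)) (N : ℕ) : VV n N (hh hsub x) = uu hsub x N := by
  haveI : ∀ i, NeZero (n i) := fun i => ⟨(hn i).ne'⟩
  induction N with
  | zero =>
    have := uu_lt hsub hn x 0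
    simp only [PP, Finset.range_zero, Finset.prod_empty, Nat.lt_one_iff] at this
    simp [VV, this]
  | succ N ih =>
    have hP := PP_pos hn N
    have hU := uu_lt hsub hn x (N + 1)
    rw [PP_succ, Nat.mul_comm] at hU
    have hdiv : uu hsub x (N + 1) / PP n N < n N := Nat.div_lt_iff_lt_mul hP |>.mpr hU
    rw [VV_succ, ih]
    show uu hsub x N + ((((uu hsub x (N + 1) / PP n N : ℕ) : ZMod (n N))).val) * PP n N
      = uu hsub x (N + 1)
    rw [ZMod.val_natCast, Nat.mod_eq_of_lt hdiv,
      ← uu_trunc hsub hn hm (Nat.le_succ N) x, Nat.mod_add_div']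

lemma hh_equivariant (hn : ∀ i, 0 < n i) (hm : ∀ i, 0 < m i)
    (x : ∀ i, ZMod (m i)) : hh hsub (odometer m x) = odometer n (hh hsub x) := by
  funext i
  have key : VV n (i + 1) (hh hsub (odometer m x))
      = VV n (i + 1) (odometer n (hh hsub x)) := by
    rw [VV_hh hsub hn hm, VV_odometer_mod hn, VV_hh hsub hn hm,
      uu_odometer hsub hn hm]
  exact VV_inj hn key i (Nat.lt_succ_self i)

lemma hh_continuous (hn : ∀ i, 0 < n i) (hm : ∀ i, 0 < m i) :
    Continuous (hh hsub) := by
  apply continuous_pi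
  intro i
  exact continuous_of_depends _ (Mc hsub (i + 1)) fun x y h => by
    show ((uu hsub x (i + 1) / PP n i : ℕ) : ZMod (n i))
      = ((uu hsub y (i + 1) / PP n i : ℕ) : ZMod (n i))
    rw [uu, uu, VV_agree h]

lemma hh_surjective (hn : ∀ i, 0 < n i) (hm : ∀ i, 0 < m i) :
    Function.Surjective (hh hsub) := by
  haveI : ∀ i, NeZero (m i) := fun i => ⟨(hm i).ne'⟩
  intro y
  set S : ℕ → Set (∀ i, ZMod (m i)) :=
    fun N => {x | uu hsub x N = VV n N y} with hS
  have hmono : ∀ N, S (N + 1) ⊆ S N := by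
    intro N x hx
    show uu hsub x N = VV n N y
    rw [← uu_trunc hsub hn hm (Nat.le_succ N) x, hx, VV_trunc hn (Nat.le_succ N)]
  have hne : ∀ N, (S N).Nonempty := by
    intro N
    refine ⟨(odometer m)^[VV n N y] (fun i => 0), ?_⟩
    show uu hsub ((odometer m)^[VV n N y] fun i => 0) N = VV n N y
    rw [uu_iter hsub hn hm, uu, VV_zero_pt hm, Nat.zero_mod, Nat.zero_add,
      Nat.mod_eq_of_lt (VV_lt hn N y)]
  have hclosed : ∀ N, IsClosed (S N) := by
    intro N
    have hcont : Continuous fun x => uu hsub x N :=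
      continuous_of_depends _ (Mc hsub N) fun x y h => by rw [uu, uu, VV_agree h]
    exact (isClosed_singleton (x := VV n N y)).preimage hcont
  obtain ⟨x, hx⟩ := IsCompact.nonempty_iInter_of_sequence_nonempty_isCompact_isClosed
    S hmono hne ((hclosed 0).isCompact) hclosed
  refine ⟨x, ?_⟩
  funext i
  have key : VV n (i + 1) (hh hsub x) = VV n (i + 1) y := by
    rw [VV_hh hsub hn hm]
    exact Set.mem_iInter.mp hx (i + 1)
  exact VV_inj hn key i (Nat.lt_succ_self i)

lemma hh_injective (hn : ∀ i, 0 < n i) (hm : ∀ i, 0 < m i)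
    (hsub' : ∀ M, ∃ N, PP m M ∣ PP n N) : Function.Injective (hh hsub) := by
  intro x x' hxx
  have huu : ∀ N, uu hsub x N = uu hsub x' N := by
    intro N
    rw [← VV_hh hsub hn hm, ← VV_hh hsub hn hm, hxx]
  funext i
  obtain ⟨N, hN⟩ := hsub' (i + 1)
  have hd : PP m (i + 1) ∣ PP m (Mc hsub N) := hN.trans (Mc_spec hsub N)
  have key : ∀ z : ∀ j, ZMod (m j), VV m (i + 1) z = uu hsub z N % PP m (i + 1) := by
    intro z
    have h1 : VV m (max (i + 1) (Mc hsub N)) z % PP m (i + 1) = VV m (i + 1) z :=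
      VV_trunc hm (le_max_left _ _) z
    have h2 : VV m (max (i + 1) (Mc hsub N)) z % PP m (Mc hsub N)
        = VV m (Mc hsub N) z := VV_trunc hm (le_max_right _ _) z
    rw [uu, Nat.mod_mod_of_dvd _ hN, ← h2, Nat.mod_mod_of_dvd _ hd, h1]
  have : VV m (i + 1) x = VV m (i + 1) x' := by rw [key, key, huu N]
  exact VV_inj hm this i (Nat.lt_succ_self i)

end Construct

end Stmt19

open Stmt19

/-- Let `T₁, T₂` be the odometers on `∏ ℤ/n_iℤ` and `∏ ℤ/m_iℤ`.  Then (i) `T₁` is a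
continuous factor of `T₂` iff `CF(T₁) ⊆ CF(T₂)`; (ii) `T₁` and `T₂` are
continuously conjugated iff `CF(T₁) = CF(T₂)`. -/
theorem stmt19 (n m : ℕ → ℕ) (hn : ∀ i, 0 < n i) (hm : ∀ i, 0 < m i) :
    ((∃ h : ((i : ℕ) → ZMod (m i)) → ((i : ℕ) → ZMod (n i)),
        Continuous h ∧ Function.Surjective h ∧
        ∀ x, h (odometer m x) = odometer n (h x)) ↔
      CF (odometer n) ⊆ CF (odometer m)) ∧
    ((∃ h : ((i : ℕ) → ZMod (m i)) ≃ₜ ((i : ℕ) → ZMod (n i)),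
        ∀ x, h (odometer m x) = odometer n (h x)) ↔
      CF (odometer n) = CF (odometer m)) := by
  haveI : ∀ i, NeZero (n i) := fun i => ⟨(hn i).ne'⟩
  haveI : ∀ i, NeZero (m i) := fun i => ⟨(hm i).ne'⟩
  have factor_CF : ∀ h : ((i : ℕ) → ZMod (m i)) → ((i : ℕ) → ZMod (n i)),
      Continuous h → Function.Surjective h →
      (∀ x, h (odometer m x) = odometer n (h x)) →
      CF (odometer n) ⊆ CF (odometer m) := by
    rintro h hc hs he k ⟨hk, f, cf, sf, ef⟩
    refine ⟨hk, f ∘ h, cf.comp hc, sf.comp hs, fun x => ?_⟩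
    show f (h (odometer m x)) = f (h x) + 1
    rw [he x, ef]
  constructor
  · constructor
    · rintro ⟨h, hc, hs, he⟩
      exact factor_CF h hc hs he
    · intro hsub
      have hsub1 : ∀ N, ∃ M, PP n N ∣ PP m M := by
        intro N
        have h1 : PP n N ∈ CF (odometer n) := by
          rw [CF_odometer hn]; exact ⟨PP_pos hn N, N, dvd_rfl⟩
        have h2 := hsub h1
        rw [CF_odometer hm] at h2
        exact h2.2
      exact ⟨hh hsub1, hh_continuous hsub1 hn hm, hh_surjective hsub1 hn hm,
        hh_equivariant hsub1 hn hm⟩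
  · constructor
    · rintro ⟨h, he⟩
      apply Set.Subset.antisymm
      · exact factor_CF h h.continuous h.surjective he
      · have he' : ∀ y, h.symm (odometer n y) = odometer m (h.symm y) := by
          intro y
          apply h.injective
          rw [h.apply_symm_apply, he (h.symm y), h.apply_symm_apply]
        rintro k ⟨hk, f, cf, sf, ef⟩
        refine ⟨hk, f ∘ h.symm, cf.comp h.symm.continuous,
          sf.comp h.symm.surjective, fun x => ?_⟩
        show f (h.symm (odometer n x)) = f (h.symm x) + 1
        rw [he' x, ef]
    · intro heq
      have hsub1 : ∀ N, ∃ M, PP n N ∣ PP m M := by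
        intro N
        have h1 : PP n N ∈ CF (odometer n) := by
          rw [CF_odometer hn]; exact ⟨PP_pos hn N, N, dvd_rfl⟩
        rw [heq, CF_odometer hm] at h1
        exact h1.2
      have hsub2 : ∀ M, ∃ N, PP m M ∣ PP n N := by
        intro M
        have h1 : PP m M ∈ CF (odometer m) := by
          rw [CF_odometer hm]; exact ⟨PP_pos hm M, M, dvd_rfl⟩
        rw [← heq, CF_odometer hn] at h1
        exact h1.2
      have hbij : Function.Bijective (hh hsub1) :=
        ⟨hh_injective hsub1 hn hm hsub2, hh_surjective hsub1 hn hm⟩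
      have hc : Continuous (Equiv.ofBijective _ hbij) := hh_continuous hsub1 hn hm
      exact ⟨hc.homeoOfEquivCompactToT2, fun x => hh_equivariant hsub1 hn hm x⟩
end
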